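/- arXiv:2507.12352 — 8 statements merged into one kernel-verified Lean document; each statement's English description precedes it below -/
import Mathlib

section
/- Let n ≥ 0. In the formal power series ring ℚ[[q]], the series Y_n(q) satisfies Y_n(q) = (1/(2^n (n+1))) · Σ_{k=0}^{⌊n/2⌋} C(n+1, 2k+1) · θ(q)^{2n−4k} · U_{2k}(q), where C(a,b) denotes the binomial coefficient. -/
open PowerSeries Finset
open scoped Classical

/-- A series supported on triangular numbers: the coefficient of `q^(k(k+1)/2)` is `c k`. -/
noncomputable def trigSeries (c : ℕ → ℚ) : PowerSeries ℚ :=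
  PowerSeries.mk fun m => if h : ∃ k, k * (k + 1) / 2 = m then c (Nat.find h) else 0

/-- Jacobi's series `J(q) = Σ_{k≥0} (−1)^k (2k+1) q^{k(k+1)/2}`. -/
noncomputable def Jseries : PowerSeries ℚ :=
  trigSeries fun k => (-1) ^ k * (2 * k + 1)

/-- Ramanujan's `U_{2n}(q)`. -/
noncomputable def Useries (n : ℕ) : PowerSeries ℚ :=
  trigSeries (fun k => (-1) ^ k * (2 * k + 1 : ℚ) ^ (2 * n + 1)) * Jseries⁻¹

/-- `θ(q) = 1 + 2 Σ_{n≥1} q^{n²}`. -/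
noncomputable def thetaSeries : PowerSeries ℚ :=
  PowerSeries.mk fun m => if m = 0 then 1 else if IsSquare m then 2 else 0

/-- `exp(θ(q)² X / 2)` as a power series in `X` over `ℚ[[q]]`. -/
noncomputable def expThetaX : PowerSeries (PowerSeries ℚ) :=
  PowerSeries.mk fun m =>
    PowerSeries.C (R := ℚ) (1 / (2 ^ m * m.factorial)) * thetaSeries ^ (2 * m)

/-- `Σ_{t≥0} U_{2t}(q) X^{2t} / (4^t (2t+1)!)` as a power series in `X` over `ℚ[[q]]`. -/
noncomputable def OmegaX : PowerSeries (PowerSeries ℚ) :=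
  PowerSeries.mk fun m =>
    if Even m then
      PowerSeries.C (R := ℚ) (1 / (4 ^ (m / 2) * (m + 1).factorial)) * Useries (m / 2)
    else 0

/-- `Y_n(q)` is `n!` times the coefficient of `X^n` in `exp(θ² X/2)·Ω(X/2)`. -/
noncomputable def Yseries (n : ℕ) : PowerSeries ℚ :=
  (n.factorial : ℚ) • (PowerSeries.coeff (R := PowerSeries ℚ) n (expThetaX * OmegaX))

theorem stmt0 (n : ℕ) :
    Yseries n =
      PowerSeries.C (R := ℚ) (1 / (2 ^ n * (n + 1))) *
        ∑ k ∈ Finset.range (n / 2 + 1),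
          ((n + 1).choose (2 * k + 1) : PowerSeries ℚ) * thetaSeries ^ (2 * n - 4 * k) *
            Useries k := by
  set g : ℕ → PowerSeries ℚ := fun i =>
    (PowerSeries.coeff i expThetaX) * (PowerSeries.coeff (n - i) OmegaX) with hg
  have himg : ∑ i ∈ Finset.range (n + 1), g i
      = ∑ k ∈ Finset.range (n / 2 + 1), g (n - 2 * k) := by
    have hinj : ∀ x ∈ Finset.range (n / 2 + 1), ∀ y ∈ Finset.range (n / 2 + 1),
        (fun k => n - 2 * k) x = (fun k => n - 2 * k) y → x = y := by
      intro x hx y hy hxy; simp only [Finset.mem_range] at hx hy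
      simp only at hxy; omega
    rw [← Finset.sum_image (f := g) hinj]
    symm
    apply Finset.sum_subset
    · intro i hi
      simp only [Finset.mem_image, Finset.mem_range] at hi ⊢
      obtain ⟨k, hk, rfl⟩ := hi; omega
    · intro i hi hni
      have hodd : ¬ Even (n - i) := by
        simp only [Finset.mem_image, Finset.mem_range] at hi hni
        rintro ⟨r, hr⟩
        exact hni ⟨r, by omega, by omega⟩
      simp [hg, OmegaX, PowerSeries.coeff_mk, hodd]
  rw [Yseries, PowerSeries.coeff_mul, Finset.Nat.sum_antidiagonal_eq_sum_range_succ_mk]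
  rw [show (∑ i ∈ Finset.range (n + 1),
      (PowerSeries.coeff i expThetaX) * (PowerSeries.coeff (n - i) OmegaX))
      = ∑ i ∈ Finset.range (n + 1), g i from rfl, himg, Finset.smul_sum, Finset.mul_sum]
  apply Finset.sum_congr rfl
  intro k hk
  simp only [Finset.mem_range] at hk
  have h2k : 2 * k ≤ n := by omega
  have hnn : n - (n - 2 * k) = 2 * k := by omega
  have heven : Even (2 * k) := even_two_mul k
  have hdiv : 2 * k / 2 = k := by omega
  simp only [hg, expThetaX, OmegaX, PowerSeries.coeff_mk, hnn, if_pos heven, hdiv]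
  have hcoef : (n.factorial : ℚ) * ((1 / (2 ^ (n - 2 * k) * (n - 2 * k).factorial))
      * (1 / (4 ^ k * (2 * k + 1).factorial)))
      = 1 / (2 ^ n * (n + 1)) * ((n + 1).choose (2 * k + 1)) := by
    have h1 : 2 * k + 1 ≤ n + 1 := by omega
    have hch := Nat.choose_mul_factorial_mul_factorial h1
    rw [show n + 1 - (2 * k + 1) = n - 2 * k by omega] at hch
    have hchq : ((n + 1).choose (2 * k + 1) : ℚ) * (2 * k + 1).factorial
        * (n - 2 * k).factorial = (n + 1) * n.factorial := by
      exact_mod_cast congrArg (Nat.cast : ℕ → ℚ) (by rw [hch, Nat.factorial_succ])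
    have hpow : (2 : ℚ) ^ (n - 2 * k) * 4 ^ k = 2 ^ n := by
      rw [show (4 : ℚ) = 2 ^ 2 by norm_num, ← pow_mul, ← pow_add]
      congr 1; omega
    have hf1 : ((n - 2 * k).factorial : ℚ) ≠ 0 := Nat.cast_ne_zero.2 (Nat.factorial_ne_zero _)
    have hf2 : ((2 * k + 1).factorial : ℚ) ≠ 0 := Nat.cast_ne_zero.2 (Nat.factorial_ne_zero _)
    have hn1 : ((n : ℚ) + 1) ≠ 0 := by positivity
    have h2 : (2 : ℚ) ^ (n - 2 * k) ≠ 0 := by positivity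
    have h4 : (4 : ℚ) ^ k ≠ 0 := by positivity
    have h2n : (2 : ℚ) ^ n ≠ 0 := by positivity
    have hD : ((2 : ℚ) ^ (n - 2 * k) * (n - 2 * k).factorial) *
        ((4 : ℚ) ^ k * (2 * k + 1).factorial) ≠ 0 :=
      mul_ne_zero (mul_ne_zero h2 hf1) (mul_ne_zero h4 hf2)
    have hE : (2 : ℚ) ^ n * ((n : ℚ) + 1) ≠ 0 := mul_ne_zero h2n hn1
    rw [div_mul_div_comm, one_mul, mul_one_div, div_mul_eq_mul_div, one_mul,
      div_eq_div_iff hD hE]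
    linear_combination (-(2 : ℚ) ^ (n - 2 * k) * 4 ^ k) * hchq +
      (-((n : ℚ) + 1) * (n.factorial : ℚ)) * hpow
  rw [show ((((n + 1).choose (2 * k + 1) : ℕ)) : PowerSeries ℚ)
      = PowerSeries.C (R := ℚ) (((n + 1).choose (2 * k + 1) : ℚ)) from (map_natCast (C (R := ℚ)) _).symm]
  rw [PowerSeries.smul_eq_C_mul]
  rw [show 2 * n - 4 * k = 2 * (n - 2 * k) by omega]
  calc (PowerSeries.C (R := ℚ) (n.factorial : ℚ)) *
        (PowerSeries.C (R := ℚ) (1 / (2 ^ (n - 2 * k) * (n - 2 * k).factorial)) * thetaSeries ^ (2 * (n - 2 * k)) *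
          (PowerSeries.C (R := ℚ) (1 / (4 ^ k * (2 * k + 1).factorial)) * Useries k))
      = PowerSeries.C (R := ℚ) ((n.factorial : ℚ) * ((1 / (2 ^ (n - 2 * k) * (n - 2 * k).factorial))
          * (1 / (4 ^ k * (2 * k + 1).factorial)))) * (thetaSeries ^ (2 * (n - 2 * k)) * Useries k) := by
        simp only [map_mul]; ring
    _ = PowerSeries.C (R := ℚ) (1 / (2 ^ n * (n + 1)) * ((n + 1).choose (2 * k + 1))) *
          (thetaSeries ^ (2 * (n - 2 * k)) * Useries k) := by rw [hcoef]
    _ = _ := by simp only [map_mul]; ring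
end

section
/- For every n ≥ 0, the constant term (coefficient of q^0) of the formal power series Y_n(q) ∈ ℚ[[q]] equals 1/(n+1). -/
open PowerSeries Finset
open scoped Classical

lemma constCoeff_trig (c : ℕ → ℚ) : PowerSeries.constantCoeff (R := ℚ) (trigSeries c) = c 0 := by
  have h : ∃ k, k * (k + 1) / 2 = 0 := ⟨0, rfl⟩
  rw [trigSeries, ← PowerSeries.coeff_zero_eq_constantCoeff, PowerSeries.coeff_mk, dif_pos h]
  congr 1
  exact (Nat.find_eq_zero h).mpr rfl

lemma constCoeff_J : PowerSeries.constantCoeff (R := ℚ) Jseries = 1 := by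
  rw [Jseries, constCoeff_trig]; norm_num

lemma constCoeff_U (n : ℕ) : PowerSeries.constantCoeff (R := ℚ) (Useries n) = 1 := by
  rw [Useries, map_mul, constCoeff_trig, PowerSeries.constantCoeff_inv, constCoeff_J]
  norm_num

lemma constCoeff_theta : PowerSeries.constantCoeff (R := ℚ) thetaSeries = 1 := by
  rw [thetaSeries, ← PowerSeries.coeff_zero_eq_constantCoeff, PowerSeries.coeff_mk, if_pos rfl]

-- sum over odd indices of binomial coefficients, in ℚ
lemma odd_choose_sum (n : ℕ) :
    ∑ m ∈ range (n + 2), (if Odd m then ((n+1).choose m : ℚ) else 0) = 2 ^ n := by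
  have halt : ∑ m ∈ range (n + 2), ((-1 : ℚ)) ^ m * ((n+1).choose m : ℚ) = 0 := by
    have := Int.alternating_sum_range_choose_of_ne (n := n + 1) (by omega)
    have := congrArg (fun z : ℤ => (z : ℚ)) this
    push_cast at this
    simpa using this
  have hsum : ∑ m ∈ range (n + 2), ((n+1).choose m : ℚ) = 2 ^ (n+1) := by
    have := Nat.sum_range_choose (n + 1)
    have := congrArg (fun z : ℕ => (z : ℚ)) this
    push_cast at this
    simpa using this
  have h2 : (2 : ℚ) * ∑ m ∈ range (n + 2), (if Odd m then ((n+1).choose m : ℚ) else 0)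
      = ∑ m ∈ range (n + 2), ((n+1).choose m : ℚ)
        - ∑ m ∈ range (n + 2), ((-1 : ℚ)) ^ m * ((n+1).choose m : ℚ) := by
    rw [Finset.mul_sum, ← Finset.sum_sub_distrib]
    refine Finset.sum_congr rfl fun m _ => ?_
    rcases Nat.even_or_odd m with hm | hm
    · rw [if_neg (by simpa using hm), hm.neg_one_pow]; ring
    · rw [if_pos hm, hm.neg_one_pow]; ring
  have h3 := h2.trans (by rw [halt, hsum])
  rw [sub_zero, pow_succ] at h3
  linarith

lemma key_sum (n : ℕ) :
    ∑ k ∈ range (n + 1), (if Even (n - k) then ((n+1).choose k : ℚ) else 0) = 2 ^ n := by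
  rw [← Finset.sum_range_reflect]
  have : ∀ k ∈ range (n + 1),
      (if Even (n - (n - k)) then ((n+1).choose (n - k) : ℚ) else 0)
      = (if Even k then ((n+1).choose (k+1) : ℚ) else 0) := by
    intro k hk
    rw [mem_range] at hk
    have hk' : k ≤ n := by omega
    rw [Nat.sub_sub_self hk']
    congr 1
    have : n - k = (n + 1) - (k + 1) := by omega
    rw [this, Nat.choose_symm (by omega)]
  simp only [Nat.add_sub_cancel]
  rw [Finset.sum_congr rfl this]
  rw [← odd_choose_sum n, Finset.sum_range_succ' (fun m => if Odd m then ((n+1).choose m : ℚ) else 0)]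
  simp [Nat.even_add_one, Nat.odd_add_one]

theorem stmt1 (n : ℕ) :
    PowerSeries.constantCoeff (R := ℚ) (Yseries n) = 1 / (n + 1) := by
  rw [Yseries, PowerSeries.smul_eq_C_mul, map_mul, PowerSeries.constantCoeff_C,
    PowerSeries.coeff_mul, map_sum]
  have hA : ∀ i, PowerSeries.constantCoeff (R := ℚ) ((PowerSeries.coeff i) expThetaX)
      = 1 / (2 ^ i * i.factorial) := by
    intro i
    rw [expThetaX, PowerSeries.coeff_mk, map_mul, PowerSeries.constantCoeff_C, map_pow,
      constCoeff_theta, one_pow, mul_one]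
  have hB : ∀ j, PowerSeries.constantCoeff (R := ℚ) ((PowerSeries.coeff j) OmegaX)
      = if Even j then 1 / (4 ^ (j / 2) * ((j + 1).factorial : ℚ)) else 0 := by
    intro j
    rw [OmegaX, PowerSeries.coeff_mk]
    split_ifs with h
    · rw [map_mul, PowerSeries.constantCoeff_C, constCoeff_U, mul_one]
    · simp
  have hsum : ∑ p ∈ antidiagonal n, PowerSeries.constantCoeff (R := ℚ)
        ((PowerSeries.coeff p.1) expThetaX * (PowerSeries.coeff p.2) OmegaX)
      = ∑ k ∈ range (n + 1), (1 / (2 ^ k * (k.factorial : ℚ))) *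
        (if Even (n - k) then 1 / (4 ^ ((n - k) / 2) * ((n - k + 1).factorial : ℚ)) else 0) := by
    rw [Finset.Nat.sum_antidiagonal_eq_sum_range_succ
      (fun i j => PowerSeries.constantCoeff (R := ℚ)
        ((PowerSeries.coeff i) expThetaX * (PowerSeries.coeff j) OmegaX))]
    refine Finset.sum_congr rfl fun k _ => ?_
    rw [map_mul, hA, hB]
  rw [hsum, Finset.mul_sum]
  have hterm : ∀ k ∈ range (n + 1),
      (n.factorial : ℚ) * ((1 / (2 ^ k * (k.factorial : ℚ))) *
        (if Even (n - k) then 1 / (4 ^ ((n - k) / 2) * ((n - k + 1).factorial : ℚ)) else 0))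
      = (1 / (2 ^ n * (n + 1))) * (if Even (n - k) then ((n+1).choose k : ℚ) else 0) := by
    intro k hk
    rw [mem_range] at hk
    have hkn : k ≤ n := by omega
    split_ifs with h
    · obtain ⟨m, hm⟩ := h
      have h4 : (4 : ℚ) ^ ((n - k) / 2) = 2 ^ (n - k) := by
        rw [hm]
        rw [show (m + m) / 2 = m by omega]
        rw [show (4 : ℚ) = 2 ^ 2 by norm_num, ← pow_mul]
        congr 1
        omega
      have hpow : (2 : ℚ) ^ k * 2 ^ (n - k) = 2 ^ n := by
        rw [← pow_add]
        congr 1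
        omega
      have hfac : ((n+1).choose k : ℚ) * k.factorial * (n + 1 - k).factorial
          = (n+1).factorial := by
        exact_mod_cast congrArg (Nat.cast : ℕ → ℚ)
          (Nat.choose_mul_factorial_mul_factorial (by omega : k ≤ n + 1))
      have hnk1 : n - k + 1 = n + 1 - k := by omega
      have hfacs : ((n+1).factorial : ℚ) = (n + 1) * n.factorial := by
        rw [Nat.factorial_succ]; push_cast; ring
      rw [hnk1, h4, one_div_mul_one_div, mul_one_div, one_div_mul_eq_div,
        div_eq_div_iff (by positivity) (by positivity)]
      linear_combination (-(2:ℚ)^n) * hfac - 2 ^ n * hfacs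
        - (((n+1).choose k : ℚ) * k.factorial * (n + 1 - k).factorial) * hpow
    · simp
  rw [Finset.sum_congr rfl hterm, ← Finset.mul_sum, key_sum n]
  have h2n : (2 : ℚ) ^ n ≠ 0 := by positivity
  have hn1 : ((n : ℚ) + 1) ≠ 0 := by positivity
  field_simp
end

section
/- For every n ≥ 1, every k ≥ 1 and every x = (x_1,…,x_k) ∈ ℚ^k, one has T_{2n+1}(x) = Σ_{j=0}^n (−1)^j A_{2j+1} C(2n+1, 2j+1) T_1(x)^{2j+1} T_{2n−2j}(x), where C(a,b) denotes the binomial coefficient. -/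
open Finset

/-- The `m`-th power sum `p_m(x) = Σ_i x_i^m`. -/
def psum {k : ℕ} (m : ℕ) (x : Fin k → ℚ) : ℚ := ∑ i, x i ^ m

/-- The weight function `φ_U` on partitions of `t`. -/
noncomputable def phiU (t : ℕ) (μ : Nat.Partition t) : ℚ :=
  ((2 * t + 1).factorial : ℚ) * 4 ^ t *
    ∏ j ∈ Finset.Icc 1 t,
      (1 / ((μ.parts.count j).factorial : ℚ)) *
        (bernoulli (2 * j) / ((2 * j) * (2 * j).factorial)) ^ (μ.parts.count j)

/-- `u_{2t}(x) = Σ_{λ⊢t} φ_U(λ) Π_j p_{2j}(x)^{m_j}`. -/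
noncomputable def u2 {k : ℕ} (t : ℕ) (x : Fin k → ℚ) : ℚ :=
  ∑ μ : Nat.Partition t,
    phiU t μ * ∏ j ∈ Finset.Icc 1 t, (psum (2 * j) x) ^ (μ.parts.count j)

/-- `ũ_{2t}(x) = Σ_{λ⊢t} φ_U(λ) Π_j (−p_{2j}(x))^{m_j}`. -/
noncomputable def ut2 {k : ℕ} (t : ℕ) (x : Fin k → ℚ) : ℚ :=
  ∑ μ : Nat.Partition t,
    phiU t μ * ∏ j ∈ Finset.Icc 1 t, (-(psum (2 * j) x)) ^ (μ.parts.count j)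

/-- `P_n(x) = Σ_{∅≠S⊆{1,…,k}} (−1)^{|S|−1} (Σ_{i∈S} x_i)^n`. -/
def Pn {k : ℕ} (n : ℕ) (x : Fin k → ℚ) : ℚ :=
  ∑ S ∈ (Finset.univ : Finset (Fin k)).powerset.erase ∅,
    (-1 : ℚ) ^ (S.card - 1) * (∑ i ∈ S, x i) ^ n

/-- `T_n(x) = Σ_{|a|=n} (n!/Π a_i!) Π_i x_i^{a_i}/(a_i+1)`. -/
def Tpoly {k : ℕ} (n : ℕ) (x : Fin k → ℚ) : ℚ :=
  ∑ a ∈ Finset.Nat.antidiagonalTuple k n,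
    ((n.factorial : ℚ) / ∏ i, ((a i).factorial : ℚ)) * ∏ i, x i ^ (a i) / (a i + 1)

/-- `f_n(x) = Σ_{|a|=n} (n!/Π a_i!) Π_i (−1)^{a_i} B_{a_i} x_i^{a_i}`. -/
noncomputable def fpoly {k : ℕ} (n : ℕ) (x : Fin k → ℚ) : ℚ :=
  ∑ a ∈ Finset.Nat.antidiagonalTuple k n,
    ((n.factorial : ℚ) / ∏ i, ((a i).factorial : ℚ)) *
      ∏ i, (-1) ^ (a i) * bernoulli (a i) * x i ^ (a i)

/-- The tangent (zig-zag) numbers `A_{2j+1}`. -/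
noncomputable def tangentA (j : ℕ) : ℚ :=
  (-1) ^ j * 2 ^ (2 * j + 2) * (2 ^ (2 * j + 2) - 1) * bernoulli (2 * j + 2) / (2 * j + 2)


open PowerSeries

noncomputable def Th : ℚ⟦X⟧ :=
  PowerSeries.mk fun m => if Odd m then (-1)^(m/2) * tangentA (m/2) / m.factorial else 0
noncomputable def Chs : ℚ⟦X⟧ :=
  PowerSeries.mk fun m => if Even m then 1 / m.factorial else 0
noncomputable def Shs : ℚ⟦X⟧ :=
  PowerSeries.mk fun m => if Odd m then 1 / m.factorial else 0

lemma ch_add_sh : Chs + Shs = exp ℚ := by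
  ext n
  rw [map_add]
  rcases Nat.even_or_odd n with h | h
  · simp [Chs, Shs, coeff_exp, h, Nat.not_odd_iff_even.mpr h]
  · simp [Chs, Shs, coeff_exp, h, Nat.not_even_iff_odd.mpr h]

lemma ch_sub_sh : Chs - Shs = rescale (-1) (exp ℚ) := by
  ext n
  rw [map_sub, coeff_rescale]
  rcases Nat.even_or_odd n with h | h
  · simp [Chs, Shs, coeff_exp, h, Nat.not_odd_iff_even.mpr h, h.neg_one_pow]
  · simp [Chs, Shs, coeff_exp, h, Nat.not_even_iff_odd.mpr h, h.neg_one_pow]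


lemma bernoulli_odd_zero {n : ℕ} (h : Odd n) (h1 : 1 < n) : bernoulli n = 0 := by
  rw [bernoulli_eq_bernoulli'_of_ne_one (by omega), bernoulli'_eq_zero_of_odd h h1]

lemma X_mul_Th :
    X * Th = rescale 4 (bernoulliPowerSeries ℚ) - rescale 2 (bernoulliPowerSeries ℚ) + X := by
  ext n
  rw [map_add, map_sub, coeff_rescale, coeff_rescale]
  match n with
  | 0 => simp [bernoulliPowerSeries]
  | 1 =>
    rw [coeff_succ_X_mul]
    norm_num [bernoulliPowerSeries, Th, coeff_mk]
  | (m+2) =>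
    rw [coeff_succ_X_mul]
    have hXc : (coeff (R := ℚ) (m+2)) X = 0 := by rw [coeff_X, if_neg (by omega)]
    rw [hXc, add_zero]
    simp only [bernoulliPowerSeries, coeff_mk, Th, Algebra.algebraMap_self_apply]
    rcases Nat.even_or_odd m with h | h
    · obtain ⟨j, rfl⟩ := h
      have hodd : Odd (j+j+1) := ⟨j, by omega⟩
      rw [if_pos hodd, show (j+j+1)/2 = j by omega, tangentA,
        show j+j+2 = 2*j+2 by omega, show j+j+1 = 2*j+1 by omega]
      have hfac : ((2*j+2).factorial : ℚ) = (2*(j:ℚ)+2) * (2*j+1).factorial := by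
        rw [show 2*j+2 = (2*j+1)+1 from rfl, Nat.factorial_succ]
        push_cast; ring
      have h4 : (4:ℚ)^(2*j+2) = 2^(2*j+2) * 2^(2*j+2) := by
        rw [show (4:ℚ) = 2*2 by norm_num, mul_pow]
      have h1 : ((2*j+1).factorial : ℚ) ≠ 0 := Nat.cast_ne_zero.mpr (Nat.factorial_ne_zero _)
      have h2 : (2*(j:ℚ)+2) ≠ 0 := by positivity
      rw [hfac, h4]
      have hm1 : ((-1:ℚ))^j * (-1:ℚ)^j = 1 := by
        rw [← pow_add]; exact Even.neg_one_pow ⟨j, rfl⟩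
      field_simp
      ring_nf
      rw [show ((-1:ℚ))^(j*2) = 1 by rw [mul_comm, pow_mul]; norm_num]
      ring
    · have hev : ¬ Odd (m+1) := by simp [Nat.even_add_one, Nat.not_even_iff_odd.mpr h]
      rw [if_neg hev, bernoulli_odd_zero (by rcases h with ⟨t, rfl⟩; exact ⟨t+1, by omega⟩ : Odd (m+2)) (by omega)]
      simp

lemma rescale_two_exp : rescale (2:ℚ) (exp ℚ) = exp ℚ * exp ℚ := by
  have h := exp_pow_eq_rescale_exp (A := ℚ) 2
  rw [show ((2:ℕ):ℚ) = 2 by norm_num] at h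
  rw [← h]; ring

lemma rescale_four_exp : rescale (4:ℚ) (exp ℚ) = exp ℚ * exp ℚ * (exp ℚ * exp ℚ) := by
  have h := exp_pow_eq_rescale_exp (A := ℚ) 4
  rw [show ((4:ℕ):ℚ) = 4 by norm_num] at h
  rw [← h]; ring

lemma exp_mul_exp_neg : exp ℚ * rescale (-1:ℚ) (exp ℚ) = 1 := by
  have h := exp_mul_exp_eq_exp_add (A := ℚ) 1 (-1)
  rw [rescale_one] at h
  simpa [rescale_zero] using h

lemma Th_mul_Ch : Th * Chs = Shs := by
  have hkey : bernoulliPowerSeries ℚ * (exp ℚ - 1) = X := bernoulliPowerSeries_mul_exp_sub_one ℚ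
  have h2 : rescale (2:ℚ) (bernoulliPowerSeries ℚ) * (exp ℚ * exp ℚ - 1) = 2 * X := by
    have h := congrArg (rescale (2:ℚ)) hkey
    rw [map_mul, map_sub, map_one, rescale_two_exp, rescale_X] at h
    simp only [map_ofNat] at h ⊢
    linear_combination h
  have h4 : rescale (4:ℚ) (bernoulliPowerSeries ℚ) * (exp ℚ * exp ℚ * (exp ℚ * exp ℚ) - 1)
      = 4 * X := by
    have h := congrArg (rescale (4:ℚ)) hkey
    rw [map_mul, map_sub, map_one, rescale_four_exp, rescale_X] at h
    simp only [map_ofNat] at h ⊢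
    linear_combination h
  have h1 : X * Th = rescale 4 (bernoulliPowerSeries ℚ) - rescale 2 (bernoulliPowerSeries ℚ) + X :=
    X_mul_Th
  have h5 : (exp ℚ * exp ℚ - 1) * Chs = Shs * (exp ℚ * exp ℚ + 1) := by
    have key1 : (exp ℚ * exp ℚ) * (Chs - Shs) = Chs + Shs := by
      rw [ch_sub_sh, ch_add_sh, mul_assoc, exp_mul_exp_neg, mul_one]
    linear_combination key1
  have hnz : (X : ℚ⟦X⟧) * (exp ℚ * exp ℚ * (exp ℚ * exp ℚ) - 1) ≠ 0 := by
    apply mul_ne_zero X_ne_zero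
    intro hcon
    have hz : (coeff 1) (exp ℚ * exp ℚ * (exp ℚ * exp ℚ) - (1:ℚ⟦X⟧)) = 0 := by rw [hcon]; simp
    rw [map_sub] at hz
    have hc : (coeff 1) (exp ℚ * exp ℚ * (exp ℚ * exp ℚ)) = 4 := by
      rw [← rescale_four_exp, coeff_rescale, coeff_exp]
      norm_num
    simp [hc] at hz
  apply mul_right_cancel₀ hnz
  linear_combination (Chs * (exp ℚ * exp ℚ * (exp ℚ * exp ℚ) - 1)) * h1 + Chs * h4
    - (Chs * (exp ℚ * exp ℚ + 1)) * h2 + (X * (exp ℚ * exp ℚ - 1)) * h5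


noncomputable def Fx {k : ℕ} (x : Fin k → ℚ) : ℚ⟦X⟧ :=
  ∏ i : Fin k, PowerSeries.mk fun a => x i ^ a / ((a+1).factorial : ℚ)

lemma Tpoly_eq_coeff {k : ℕ} (n : ℕ) (x : Fin k → ℚ) :
    Tpoly n x = (n.factorial : ℚ) * coeff n (Fx x) := by
  rw [Fx, coeff_prod]
  simp only [coeff_mk]
  rw [Finset.mul_sum, Tpoly]
  refine Finset.sum_nbij' (fun a => Finsupp.equivFunOnFinite.symm a) (fun l => ⇑l) ?_ ?_ ?_ ?_ ?_
  · intro a ha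
    rw [Finset.Nat.mem_antidiagonalTuple] at ha
    rw [Finset.mem_finsuppAntidiag]
    refine ⟨?_, Finset.subset_univ _⟩
    rw [← ha]
    exact Finset.sum_congr rfl fun i _ => rfl
  · intro l hl
    rw [Finset.mem_finsuppAntidiag] at hl
    rw [Finset.Nat.mem_antidiagonalTuple]
    exact hl.1
  · intro a _; exact congrArg _ rfl
  · intro l _; exact Finsupp.equivFunOnFinite.symm_apply_apply l
  · intro l _
    simp only [Finsupp.coe_equivFunOnFinite_symm, Finsupp.equivFunOnFinite_symm_coe]
    have hfac : ∀ i : Fin k, (x i ^ (l i) / (((l i)+1).factorial : ℚ))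
        = (x i ^ (l i) / ((l i : ℚ) + 1)) / ((l i).factorial : ℚ) := by
      intro i
      rw [Nat.factorial_succ]
      push_cast
      rw [div_div]
    rw [Finset.prod_congr rfl fun i _ => hfac i]
    simp only [Finset.prod_div_distrib]
    ring

lemma constCoeff_factor {c : ℚ} :
    constantCoeff (PowerSeries.mk fun a => c ^ a / ((a+1).factorial : ℚ)) = 1 := by
  rw [← coeff_zero_eq_constantCoeff_apply, coeff_mk]
  norm_num

lemma coeff_one_prod {ι : Type*} [DecidableEq ι] (s : Finset ι) (f : ι → ℚ⟦X⟧)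
    (h : ∀ i, constantCoeff (f i) = 1) :
    coeff 1 (∏ i ∈ s, f i) = ∑ i ∈ s, coeff 1 (f i) := by
  induction s using Finset.cons_induction with
  | empty => simp
  | cons i s his ih =>
    have hc : constantCoeff (∏ j ∈ s, f j) = 1 := by
      rw [map_prod]
      exact Finset.prod_eq_one fun j _ => h j
    rw [Finset.prod_cons, coeff_one_mul, Finset.sum_cons, ih, h i, hc]
    ring

lemma Tpoly_one {k : ℕ} (x : Fin k → ℚ) : Tpoly 1 x = (∑ i, x i) / 2 := by
  rw [Tpoly_eq_coeff, Fx, coeff_one_prod _ _ fun i => constCoeff_factor]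
  simp only [coeff_mk]
  rw [Finset.sum_div]
  simp [Nat.factorial]

lemma rescale_C' (a c : ℚ) : rescale a (C c) = C c := by
  ext n
  rw [coeff_rescale]
  cases n with
  | zero => simp
  | succ m => simp [coeff_C]

lemma rescale_zero_exp : rescale (0:ℚ) (exp ℚ) = 1 := by
  rw [rescale_zero]
  simp [constantCoeff_exp]

lemma factor_flip (c : ℚ) :
    rescale (-1) (PowerSeries.mk fun a => c ^ a / ((a+1).factorial : ℚ))
      = rescale (-c) (exp ℚ) * (PowerSeries.mk fun a => c ^ a / ((a+1).factorial : ℚ)) := by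
  by_cases hc : c = 0
  · subst hc
    have h1 : (PowerSeries.mk fun a => (0:ℚ) ^ a / ((a+1).factorial : ℚ)) = 1 := by
      ext n
      cases n with
      | zero => simp
      | succ m => simp [zero_pow]
    rw [h1, neg_zero, rescale_zero_exp, map_one, mul_one]
  · have hXE : C c * X * (PowerSeries.mk fun a => c ^ a / ((a+1).factorial : ℚ))
        = rescale c (exp ℚ) - 1 := by
      ext n
      rw [map_sub, coeff_rescale, coeff_exp]
      cases n with
      | zero => simp
      | succ m =>
        rw [mul_assoc, coeff_C_mul, coeff_succ_X_mul, coeff_mk]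
        simp only [coeff_one, Nat.succ_ne_zero, if_false, sub_zero]
        simp only [Algebra.algebraMap_self_apply]
        rw [pow_succ]
        ring
    have happ := congrArg (rescale (-1 : ℚ)) hXE
    rw [map_mul, map_mul, rescale_C', rescale_neg_one_X, map_sub, map_one, rescale_rescale] at happ
    have hneg : rescale (c * -1) (exp ℚ) - 1
        = - (rescale (-c) (exp ℚ) * (rescale c (exp ℚ) - 1)) := by
      have hmm : rescale (-c) (exp ℚ) * rescale c (exp ℚ) = 1 := by
        rw [exp_mul_exp_eq_exp_add, neg_add_cancel, rescale_zero_exp]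
      rw [show c * -1 = -c by ring]
      linear_combination hmm
    rw [hneg, ← hXE] at happ
    have hcancel : C c * X *
        (rescale (-1) (PowerSeries.mk fun a => c ^ a / ((a+1).factorial : ℚ))
          - rescale (-c) (exp ℚ) * (PowerSeries.mk fun a => c ^ a / ((a+1).factorial : ℚ))) = 0 := by
      rw [mul_sub]
      linear_combination -happ
    have hne : (C c) * X ≠ 0 := by
      apply mul_ne_zero _ X_ne_zero
      simpa using hc
    rcases mul_eq_zero.mp hcancel with h | h
    · exact absurd h hne
    · exact sub_eq_zero.mp h

lemma prod_rescale_exp {ι : Type*} (s : Finset ι) (f : ι → ℚ) :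
    ∏ i ∈ s, rescale (f i) (exp ℚ) = rescale (∑ i ∈ s, f i) (exp ℚ) := by
  induction s using Finset.cons_induction with
  | empty => simp [rescale_zero_exp]
  | cons i s his ih =>
    rw [Finset.prod_cons, Finset.sum_cons, ih, exp_mul_exp_eq_exp_add]

lemma F_flip {k : ℕ} (x : Fin k → ℚ) :
    rescale (-1) (Fx x) = rescale (-(∑ i, x i)) (exp ℚ) * Fx x := by
  rw [Fx, map_prod, Finset.prod_congr rfl fun i _ => factor_flip (x i),
    Finset.prod_mul_distrib, prod_rescale_exp, ← Finset.sum_neg_distrib]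

lemma tanh_identity (s : ℚ) :
    1 - rescale (-s) (exp ℚ) = rescale (s/2) Th * (1 + rescale (-s) (exp ℚ)) := by
  have hc2 : Chs + Chs = exp ℚ + rescale (-1) (exp ℚ) := by
    linear_combination ch_add_sh + ch_sub_sh
  have hs2 : Shs + Shs = exp ℚ - rescale (-1) (exp ℚ) := by
    linear_combination ch_add_sh - ch_sub_sh
  have hpre : Th * (exp ℚ + rescale (-1) (exp ℚ)) = exp ℚ - rescale (-1) (exp ℚ) := by
    linear_combination (-Th) * hc2 + 2 * Th_mul_Ch + hs2
  have big := congrArg (rescale (s/2)) hpre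
  rw [map_mul, map_add, map_sub, rescale_rescale,
    show (-1 : ℚ) * (s/2) = -(s/2) by ring] at big
  set P := rescale (s/2) (exp ℚ)
  set M := rescale (-(s/2)) (exp ℚ)
  have hPM : P * M = 1 := by
    rw [exp_mul_exp_eq_exp_add, add_neg_cancel, rescale_zero_exp]
  have hMM : M * M = rescale (-s) (exp ℚ) := by
    rw [exp_mul_exp_eq_exp_add, show -(s/2) + -(s/2) = -s by ring]
  linear_combination (-M) * big + (rescale (s/2) Th - 1) * hPM + (rescale (s/2) Th + 1) * hMM

lemma main_series_identity {k : ℕ} (x : Fin k → ℚ) :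
    Fx x - rescale (-1) (Fx x)
      = rescale ((∑ i, x i)/2) Th * (Fx x + rescale (-1) (Fx x)) := by
  rw [F_flip]
  linear_combination (Fx x) * tanh_identity (∑ i, x i)

lemma sum_range_pair (m : ℕ) (g : ℕ → ℚ) :
    ∑ i ∈ Finset.range (2*m), g i = ∑ j ∈ Finset.range m, (g (2*j) + g (2*j+1)) := by
  induction m with
  | zero => simp
  | succ p ih =>
    rw [show 2*(p+1) = 2*p+1+1 by ring, Finset.sum_range_succ, Finset.sum_range_succ,
      Finset.sum_range_succ, ih]
    ring

theorem stmt5 (n k : ℕ) (hn : 1 ≤ n) (hk : 1 ≤ k) (x : Fin k → ℚ) :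
    Tpoly (2 * n + 1) x =
      ∑ j ∈ Finset.range (n + 1),
        (-1 : ℚ) ^ j * tangentA j * ((2 * n + 1).choose (2 * j + 1) : ℚ) *
          (Tpoly 1 x) ^ (2 * j + 1) * Tpoly (2 * n - 2 * j) x := by
  have hcf : ∀ m : ℕ, coeff m (Fx x) = Tpoly m x / (m.factorial : ℚ) := by
    intro m
    rw [Tpoly_eq_coeff m x]
    field_simp
  have hid := congrArg (coeff (2*n+1)) (main_series_identity x)
  rw [map_sub, coeff_rescale, coeff_mul,
    Finset.Nat.sum_antidiagonal_eq_sum_range_succ_mk,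
    show (-1:ℚ)^(2*n+1) = -1 from Odd.neg_one_pow ⟨n, by ring⟩] at hid
  simp only [Prod.fst, Prod.snd] at hid
  rw [Nat.succ_eq_add_one, show 2*n+1+1 = 2*(n+1) by ring, sum_range_pair] at hid
  have hstep : ∀ j ∈ Finset.range (n+1),
      (coeff (2*j) (rescale ((∑ i, x i)/2) Th) *
          coeff (2*n+1-2*j) (Fx x + rescale (-1) (Fx x)) +
        coeff (2*j+1) (rescale ((∑ i, x i)/2) Th) *
          coeff (2*n+1-(2*j+1)) (Fx x + rescale (-1) (Fx x)))
      = ((∑ i, x i)/2)^(2*j+1) * ((-1)^j * tangentA j / ((2*j+1).factorial : ℚ)) *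
          (2 * Tpoly (2*n-2*j) x / ((2*n-2*j).factorial : ℚ)) := by
    intro j hj
    rw [Finset.mem_range] at hj
    have h1 : coeff (2*j) (rescale ((∑ i, x i)/2) Th) = 0 := by
      rw [coeff_rescale, Th, coeff_mk, if_neg (by simp [Nat.odd_iff, Nat.mul_mod_right]), mul_zero]
    have h2 : coeff (2*j+1) (rescale ((∑ i, x i)/2) Th)
        = ((∑ i, x i)/2)^(2*j+1) * ((-1)^j * tangentA j / ((2*j+1).factorial : ℚ)) := by
      rw [coeff_rescale, Th, coeff_mk, if_pos ⟨j, by ring⟩, show (2*j+1)/2 = j by omega]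
    have h3 : 2*n+1-(2*j+1) = 2*n-2*j := by omega
    have h4 : coeff (2*n-2*j) (Fx x + rescale (-1) (Fx x))
        = 2 * Tpoly (2*n-2*j) x / (((2*n-2*j).factorial : ℚ)) := by
      rw [map_add, coeff_rescale, hcf,
        show ((-1:ℚ))^(2*n-2*j) = 1 from Even.neg_one_pow ⟨n-j, by omega⟩]
      ring
    rw [h1, h2, h3, h4, zero_mul, zero_add]
  rw [Finset.sum_congr rfl hstep, hcf] at hid
  have hfacne : ∀ m : ℕ, ((m.factorial : ℚ)) ≠ 0 :=
    fun m => Nat.cast_ne_zero.mpr (Nat.factorial_ne_zero m)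
  have hTexp : Tpoly (2*n+1) x
      = ((2*n+1).factorial : ℚ)/2 * (Tpoly (2*n+1) x / ((2*n+1).factorial : ℚ)
          - -1 * (Tpoly (2*n+1) x / ((2*n+1).factorial : ℚ))) := by
    field_simp
    ring
  rw [hTexp, hid, Finset.mul_sum, Tpoly_one]
  refine Finset.sum_congr rfl fun j hj => ?_
  rw [Finset.mem_range] at hj
  have hle : 2*j+1 ≤ 2*n+1 := by omega
  have hch : (((2*n+1).choose (2*j+1)) : ℚ)
      = ((2*n+1).factorial : ℚ) / (((2*j+1).factorial : ℚ) * (((2*n-2*j)).factorial : ℚ)) := by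
    rw [Nat.cast_choose ℚ hle, show 2*n+1-(2*j+1) = 2*n-2*j by omega]
  rw [hch]
  field_simp
end

section
/- Let k ≥ 1 and n ≥ k be integers, and let x_1,…,x_k be nonnegative real numbers. Then (−1)^{k+1} · Σ_{∅≠S⊆{1,…,k}} (−1)^{|S|−1} (Σ_{i∈S} x_i)^n ≥ 0. (Equivalently, the polynomial T_{n−k} determined by P_n(x) = (−1)^{k+1}(n!/(n−k)!)(Π_{i}x_i)·T_{n−k}(x) is nonnegative for nonnegative arguments.) -/
open Finset

lemma aux_sign (k : ℕ) (R : Finset (Fin k)) :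
    ∑ S ∈ (univ.powerset : Finset (Finset (Fin k))).filter (fun S => R ⊆ S),
      ((-1:ℝ))^S.card = if R = univ then (-1:ℝ)^k else 0 := by
  have h1 : ∑ S ∈ (univ.powerset : Finset (Finset (Fin k))).filter (fun S => R ⊆ S),
      ((-1:ℝ))^S.card = ∑ T ∈ Rᶜ.powerset, ((-1:ℝ))^(T ∪ R).card := by
    apply sum_bij' (fun S _ => S \ R) (fun T _ => T ∪ R)
    · intro S hS
      rw [mem_powerset]
      intro a ha
      rw [mem_sdiff] at ha
      simpa using ha.2
    · intro T hT
      simp only [mem_powerset] at hT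
      simp [mem_filter, mem_powerset]
    · intro S hS
      simp only [mem_filter, mem_powerset] at hS
      exact sdiff_union_of_subset hS.2
    · intro T hT
      simp only [mem_powerset] at hT
      rw [union_sdiff_right]
      exact sdiff_eq_self_of_disjoint (disjoint_compl_left.mono_left hT)
    · intro S hS
      simp only [mem_filter, mem_powerset] at hS
      rw [sdiff_union_of_subset hS.2]
  rw [h1]
  have h2 : ∀ T ∈ Rᶜ.powerset, ((-1:ℝ))^(T ∪ R).card = (-1:ℝ)^R.card * (-1:ℝ)^T.card := by
    intro T hT
    rw [mem_powerset] at hT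
    rw [card_union_of_disjoint (disjoint_compl_left.mono_left hT), pow_add, mul_comm]
  rw [sum_congr rfl h2, ← mul_sum]
  have h3 : ∑ T ∈ Rᶜ.powerset, ((-1:ℝ))^T.card
      = ((∑ T ∈ Rᶜ.powerset, ((-1:ℤ))^T.card : ℤ) : ℝ) := by push_cast; rfl
  rw [h3, Finset.sum_powerset_neg_one_pow_card]
  by_cases h : R = univ
  · subst h
    simp [card_univ]
  · have hc : Rᶜ ≠ ∅ := by simpa [compl_eq_empty_iff] using h
    simp [h, hc]


/-- `P_n(x) = Σ_{∅≠S⊆{1,…,k}} (−1)^{|S|−1} (Σ_{i∈S} x_i)^n` over the reals. -/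
def PnR {k : ℕ} (n : ℕ) (x : Fin k → ℝ) : ℝ :=
  ∑ S ∈ (Finset.univ : Finset (Fin k)).powerset.erase ∅,
    (-1 : ℝ) ^ (S.card - 1) * (∑ i ∈ S, x i) ^ n

theorem stmt6 (k n : ℕ) (hk : 1 ≤ k) (hn : k ≤ n) (x : Fin k → ℝ) (hx : ∀ i, 0 ≤ x i) :
    0 ≤ (-1 : ℝ) ^ (k + 1) * PnR n x := by
  classical
  have hn1 : n ≠ 0 := by omega
  set w : (Fin n → Fin k) → ℝ := fun f => ∏ j, x (f j) with hw
  have key : (-1 : ℝ) ^ (k + 1) * PnR n x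
      = ∑ f : Fin n → Fin k, (-1:ℝ)^k * w f *
          (if (Finset.image f univ : Finset (Fin k)) = univ then (-1:ℝ)^k else 0) := by
    rw [PnR, mul_sum]
    have hstep : ∀ S ∈ (univ.powerset : Finset (Finset (Fin k))).erase ∅,
        (-1:ℝ)^(k+1) * ((-1 : ℝ) ^ (S.card - 1) * (∑ i ∈ S, x i) ^ n)
          = (-1:ℝ)^k * (-1:ℝ)^S.card * (∑ i ∈ S, x i) ^ n := by
      intro S hS
      have hS0 : S ≠ ∅ := (mem_erase.mp hS).1
      have hc : 1 ≤ S.card := Finset.card_pos.mpr (nonempty_iff_ne_empty.mpr hS0)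
      have : (-1:ℝ)^(S.card) = (-1)^(S.card-1) * (-1) := by
        rw [← pow_succ]; congr 1; omega
      rw [this, pow_succ]; ring
    rw [sum_congr rfl hstep]
    have hins : (univ.powerset : Finset (Finset (Fin k)))
        = insert ∅ ((univ.powerset : Finset (Finset (Fin k))).erase ∅) :=
      (insert_erase (empty_mem_powerset _)).symm
    have h0 : ∑ S ∈ (univ.powerset : Finset (Finset (Fin k))).erase ∅,
        (-1:ℝ)^k * (-1:ℝ)^S.card * (∑ i ∈ S, x i) ^ n
        = ∑ S ∈ (univ.powerset : Finset (Finset (Fin k))),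
            (-1:ℝ)^k * (-1:ℝ)^S.card * (∑ i ∈ S, x i) ^ n := by
      rw [hins, sum_insert (notMem_erase _ _)]
      simp [zero_pow hn1]
    rw [h0]
    have hpow : ∀ S : Finset (Fin k),
        (∑ i ∈ S, x i) ^ n = ∑ f : Fin n → Fin k,
          (if (∀ j, f j ∈ S) then w f else 0) := by
      intro S
      have h1 : (∑ i ∈ S, x i) ^ n = ∏ _j : Fin n, (∑ i ∈ S, x i) := by
        rw [prod_const, card_univ, Fintype.card_fin]
      rw [h1, Finset.prod_univ_sum]
      have h2 : Fintype.piFinset (fun _ : Fin n => S)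
          = univ.filter (fun f : Fin n → Fin k => ∀ j, f j ∈ S) := by
        ext f; simp [Fintype.mem_piFinset]
      rw [h2, sum_filter]
    calc ∑ S ∈ (univ.powerset : Finset (Finset (Fin k))),
            (-1:ℝ)^k * (-1:ℝ)^S.card * (∑ i ∈ S, x i) ^ n
        = ∑ S ∈ (univ.powerset : Finset (Finset (Fin k))), ∑ f : Fin n → Fin k,
            (-1:ℝ)^k * (-1:ℝ)^S.card * (if (∀ j, f j ∈ S) then w f else 0) := by
          refine sum_congr rfl fun S _ => ?_
          rw [hpow S, mul_sum]
      _ = ∑ f : Fin n → Fin k, ∑ S ∈ (univ.powerset : Finset (Finset (Fin k))),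
            (-1:ℝ)^k * (-1:ℝ)^S.card * (if (∀ j, f j ∈ S) then w f else 0) :=
          sum_comm
      _ = ∑ f : Fin n → Fin k, (-1:ℝ)^k * w f *
          (if (Finset.image f univ : Finset (Fin k)) = univ then (-1:ℝ)^k else 0) := by
          refine sum_congr rfl fun f _ => ?_
          have hcond : ∀ S : Finset (Fin k), (∀ j, f j ∈ S) ↔ Finset.image f univ ⊆ S := by
            intro S; simp [Finset.image_subset_iff]
          have : ∑ S ∈ (univ.powerset : Finset (Finset (Fin k))),
              (-1:ℝ)^k * (-1:ℝ)^S.card * (if (∀ j, f j ∈ S) then w f else 0)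
              = ∑ S ∈ (univ.powerset : Finset (Finset (Fin k))),
                (if Finset.image f univ ⊆ S then ((-1:ℝ)^k * w f) * (-1:ℝ)^S.card else 0) := by
            refine sum_congr rfl fun S _ => ?_
            simp only [hcond S]
            split_ifs with h <;> ring
          rw [this, ← sum_filter, ← mul_sum, aux_sign]
  rw [key]
  refine sum_nonneg fun f _ => ?_
  have hwf : 0 ≤ w f := prod_nonneg fun j _ => hx _
  split_ifs with h
  · have : (-1:ℝ)^k * w f * (-1:ℝ)^k = w f := by
      have h2 : (-1:ℝ)^k * (-1:ℝ)^k = 1 := by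
        rw [← mul_pow]; norm_num
      calc (-1:ℝ)^k * w f * (-1:ℝ)^k = ((-1:ℝ)^k * (-1:ℝ)^k) * w f := by ring
        _ = w f := by rw [h2, one_mul]
    rw [this]; exact hwf
  · simp
end

section
/- Let n ≥ 0, k ≥ 1 and x = (x_1,…,x_k) ∈ ℚ^k. Then Σ_{∅≠S⊆{1,…,k}} (−1)^{|S|−1} (Σ_{i∈S} x_i)^{n+k} = (−1)^{k+1} · ((n+k)!/n!) · (Π_{j=1}^k x_j) · Σ_{a∈ℕ^k, a_1+⋯+a_k = n} (n!/(a_1!⋯a_k!)) Π_{i=1}^k x_i^{a_i}/(a_i+1). In other words, the polynomial T_n defined by the relation P_{n+k}(x) = (−1)^{k+1}((n+k)!/n!)(Π_j x_j)·T_n(x) is given explicitly by T_n(x) = Σ_{a∈ℕ^k, |a|=n} (n!/(a_1!⋯a_k!)) Π_i x_i^{a_i}/(a_i+1). -/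
open Finset

lemma aux_superset_sum {k : ℕ} (A : Finset (Fin k)) (hA : A.Nonempty) :
    (∑ S ∈ (Finset.univ : Finset (Fin k)).powerset,
      if A ⊆ S then ((-1:ℚ) ^ (S.card - 1)) else 0)
    = if A = Finset.univ then (-1:ℚ) ^ (k - 1) else 0 := by
  classical
  rw [Finset.sum_ite, Finset.sum_const_zero, add_zero]
  have h1 : ∑ S ∈ Finset.univ.powerset.filter (fun S => A ⊆ S), (-1:ℚ) ^ (S.card - 1)
      = ∑ T ∈ ((Finset.univ : Finset (Fin k)) \ A).powerset,
          (-1:ℚ) ^ ((A ∪ T).card - 1) := by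
    refine Finset.sum_nbij' (fun S => S \ A) (fun T => A ∪ T) ?_ ?_ ?_ ?_ ?_
    · intro S hS
      simp only [mem_filter, mem_powerset] at hS
      simp only [mem_powerset]
      exact sdiff_subset_sdiff hS.1 (le_refl _)
    · intro T hT
      simp only [mem_powerset] at hT ⊢
      simp only [mem_filter, mem_powerset]
      exact ⟨subset_univ _, subset_union_left⟩
    · intro S hS
      simp only [mem_filter, mem_powerset] at hS
      exact Finset.union_sdiff_of_subset hS.2
    · intro T hT
      simp only [mem_powerset] at hT
      rw [Finset.union_sdiff_cancel_left (disjoint_of_subset_right hT disjoint_sdiff)]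
    · intro S hS
      simp only [mem_filter, mem_powerset] at hS
      rw [Finset.union_sdiff_of_subset hS.2]
  rw [h1]
  have h2 : ∀ T ∈ ((Finset.univ : Finset (Fin k)) \ A).powerset,
      (-1:ℚ) ^ ((A ∪ T).card - 1) = (-1:ℚ) ^ (A.card - 1) * (-1:ℚ) ^ T.card := by
    intro T hT
    simp only [mem_powerset] at hT
    have hdisj : Disjoint A T := disjoint_of_subset_right hT disjoint_sdiff
    rw [Finset.card_union_of_disjoint hdisj, ← pow_add]
    congr 1
    have := hA.card_pos
    omega
  rw [Finset.sum_congr rfl h2, ← Finset.mul_sum]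
  have h3 : ∑ T ∈ ((Finset.univ : Finset (Fin k)) \ A).powerset, (-1:ℚ) ^ T.card
      = if (Finset.univ : Finset (Fin k)) \ A = ∅ then 1 else 0 := by
    have hz := Finset.sum_powerset_neg_one_pow_card (x := (Finset.univ : Finset (Fin k)) \ A)
    calc ∑ T ∈ ((Finset.univ : Finset (Fin k)) \ A).powerset, (-1:ℚ) ^ T.card
        = ((∑ T ∈ ((Finset.univ : Finset (Fin k)) \ A).powerset, (-1:ℤ) ^ T.card : ℤ) : ℚ) := by
          push_cast; rfl
      _ = _ := by rw [hz]; split <;> norm_num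
  rw [h3]
  by_cases hAu : A = Finset.univ
  · simp [hAu, Finset.card_univ]
  · have : (Finset.univ : Finset (Fin k)) \ A ≠ ∅ := by
      intro h
      exact hAu (Finset.univ_subset_iff.mp (Finset.sdiff_eq_empty_iff_subset.mp h))
    simp [hAu, this]

lemma aux_piAntidiag_eq {k m : ℕ} (S : Finset (Fin k)) :
    Finset.piAntidiag S m = (Finset.piAntidiag (Finset.univ : Finset (Fin k)) m).filter
      (fun b => ∀ i, b i ≠ 0 → i ∈ S) := by
  classical
  ext b
  simp only [mem_filter, Finset.mem_piAntidiag, mem_univ, implies_true, and_true]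
  have hsums : (∀ i, b i ≠ 0 → i ∈ S) → ∑ i ∈ S, b i = ∑ i, b i := fun hsupp =>
    Finset.sum_subset (subset_univ S) (fun i _ hi => by
      by_contra h; exact hi (hsupp i h))
  constructor
  · rintro ⟨hsum, hsupp⟩
    exact ⟨by rw [← hsums hsupp]; exact hsum, hsupp⟩
  · rintro ⟨hsum, hsupp⟩
    exact ⟨by rw [hsums hsupp]; exact hsum, hsupp⟩

lemma aux_multinomial_congr {k : ℕ} (S : Finset (Fin k)) (b : Fin k → ℕ)
    (hb : ∀ i, b i ≠ 0 → i ∈ S) :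
    Nat.multinomial S b = Nat.multinomial Finset.univ b := by
  classical
  unfold Nat.multinomial
  have h1 : ∑ i ∈ S, b i = ∑ i, b i :=
    Finset.sum_subset (subset_univ S) (fun i _ hi => by
      by_contra h; exact hi (hb i h))
  have h2 : ∏ i ∈ S, (b i).factorial = ∏ i, (b i).factorial :=
    Finset.prod_subset (subset_univ S) (fun i _ hi => by
      have : b i = 0 := by by_contra h; exact hi (hb i h)
      simp [this])
  rw [h1, h2]

lemma aux_prod_congr {k : ℕ} (S : Finset (Fin k)) (x : Fin k → ℚ) (b : Fin k → ℕ)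
    (hb : ∀ i, b i ≠ 0 → i ∈ S) :
    ∏ i ∈ S, x i ^ b i = ∏ i, x i ^ b i := by
  classical
  refine Finset.prod_subset (subset_univ S) (fun i _ hi => ?_)
  have : b i = 0 := by by_contra h; exact hi (hb i h)
  simp [this]

lemma aux_term {k n : ℕ} (x : Fin k → ℚ) (a : Fin k → ℕ) (ha : ∑ i, a i = n) :
    (Nat.multinomial (Finset.univ : Finset (Fin k)) (fun i => a i + 1) : ℚ) *
        ∏ i, x i ^ (a i + 1)
      = (((n + k).factorial : ℚ) / (n.factorial : ℚ)) * (∏ j, x j) *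
          (((n.factorial : ℚ) / ∏ i, ((a i).factorial : ℚ)) *
            ∏ i, x i ^ (a i) / (a i + 1)) := by
  classical
  have hsum : ∑ i, (a i + 1) = n + k := by
    rw [Finset.sum_add_distrib, ha]
    simp [Finset.card_univ]
  have hspec := Nat.multinomial_spec (Finset.univ : Finset (Fin k)) (fun i => a i + 1)
  rw [hsum] at hspec
  have hcast : (∏ i, (((a i + 1).factorial : ℚ))) *
      (Nat.multinomial (Finset.univ : Finset (Fin k)) (fun i => a i + 1) : ℚ)
      = ((n + k).factorial : ℚ) := by exact_mod_cast congrArg (Nat.cast (R := ℚ)) hspec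
  have hPBA : (∏ i, (((a i + 1).factorial : ℚ)))
      = (∏ i, ((a i : ℚ) + 1)) * ∏ i, ((a i).factorial : ℚ) := by
    rw [← Finset.prod_mul_distrib]
    refine Finset.prod_congr rfl fun i _ => ?_
    rw [Nat.factorial_succ]
    push_cast
    ring
  have hX : (∏ i, x i ^ (a i + 1)) = (∏ j, x j) * ∏ i, x i ^ a i := by
    rw [← Finset.prod_mul_distrib]
    exact Finset.prod_congr rfl fun i _ => by ring
  have hD : (∏ i, x i ^ (a i) / ((a i : ℚ) + 1))
      = (∏ i, x i ^ a i) / ∏ i, ((a i : ℚ) + 1) := by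
    rw [Finset.prod_div_distrib]
  have hPB : (∏ i, ((a i : ℚ) + 1)) ≠ 0 :=
    Finset.prod_ne_zero_iff.mpr fun i _ => by positivity
  have hPA : (∏ i, ((a i).factorial : ℚ)) ≠ 0 :=
    Finset.prod_ne_zero_iff.mpr fun i _ => by
      exact_mod_cast (Nat.factorial_pos (a i)).ne'
  have hNf : ((n.factorial : ℚ)) ≠ 0 := by exact_mod_cast (Nat.factorial_pos n).ne'
  have hmulti : (Nat.multinomial (Finset.univ : Finset (Fin k)) (fun i => a i + 1) : ℚ)
      = ((n + k).factorial : ℚ) / ((∏ i, ((a i : ℚ) + 1)) * ∏ i, ((a i).factorial : ℚ)) := by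
    rw [eq_div_iff (by exact mul_ne_zero hPB hPA)]
    rw [← hPBA]
    linarith [hcast]
  rw [hmulti, hX, hD]
  field_simp

theorem stmt7' (n k : ℕ) (hk : 1 ≤ k) (x : Fin k → ℚ) :
    (∑ S ∈ (Finset.univ : Finset (Fin k)).powerset.erase ∅,
      (-1 : ℚ) ^ (S.card - 1) * (∑ i ∈ S, x i) ^ (n + k)) =
      (-1 : ℚ) ^ (k + 1) * (((n + k).factorial : ℚ) / (n.factorial : ℚ)) * (∏ j, x j) *
        ∑ a ∈ Finset.Nat.antidiagonalTuple k n,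
          ((n.factorial : ℚ) / ∏ i, ((a i).factorial : ℚ)) * ∏ i, x i ^ (a i) / (a i + 1) := by
  classical
  have step1 : ∀ S ∈ (Finset.univ : Finset (Fin k)).powerset.erase ∅,
      (-1:ℚ) ^ (S.card - 1) * (∑ i ∈ S, x i) ^ (n + k)
      = ∑ b ∈ Finset.piAntidiag (Finset.univ : Finset (Fin k)) (n + k),
          if (∀ i, b i ≠ 0 → i ∈ S) then
            ((Nat.multinomial Finset.univ b : ℚ) * ∏ i, x i ^ b i) * (-1:ℚ) ^ (S.card - 1)
          else 0 := by
    intro S hS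
    rw [Finset.sum_pow_eq_sum_piAntidiag S x (n + k), aux_piAntidiag_eq, Finset.sum_filter,
      Finset.mul_sum]
    refine Finset.sum_congr rfl fun b hb => ?_
    rw [mul_ite, mul_zero]
    split
    · next h =>
      rw [aux_multinomial_congr S b h, aux_prod_congr S x b h]
      ring
    · rfl
  rw [Finset.sum_congr rfl step1, Finset.sum_comm]
  have step2 : ∀ b ∈ Finset.piAntidiag (Finset.univ : Finset (Fin k)) (n + k),
      (∑ S ∈ (Finset.univ : Finset (Fin k)).powerset.erase ∅,
        if (∀ i, b i ≠ 0 → i ∈ S) then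
          ((Nat.multinomial Finset.univ b : ℚ) * ∏ i, x i ^ b i) * (-1:ℚ) ^ (S.card - 1)
        else 0)
      = ((Nat.multinomial Finset.univ b : ℚ) * ∏ i, x i ^ b i) *
          (if (∀ i, b i ≠ 0) then (-1:ℚ) ^ (k - 1) else 0) := by
    intro b hb
    have hbsum : ∑ i, b i = n + k := by
      simpa using (Finset.mem_piAntidiag.mp hb).1
    have hbne : ∃ i, b i ≠ 0 := by
      by_contra h
      push_neg at h
      have : ∑ i, b i = 0 := Finset.sum_eq_zero fun i _ => h i
      omega
    set A : Finset (Fin k) := Finset.univ.filter (fun i => b i ≠ 0) with hAdef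
    have hA : A.Nonempty := by
      obtain ⟨i, hi⟩ := hbne
      exact ⟨i, by simp [hAdef, hi]⟩
    have hcond : ∀ S : Finset (Fin k), (∀ i, b i ≠ 0 → i ∈ S) ↔ A ⊆ S := by
      intro S
      constructor
      · intro h i hi
        simp only [hAdef, mem_filter] at hi
        exact h i hi.2
      · intro h i hi
        exact h (by simp [hAdef, hi])
    have hzero : (if (∀ i, b i ≠ 0 → i ∈ (∅ : Finset (Fin k))) then
        ((Nat.multinomial Finset.univ b : ℚ) * ∏ i, x i ^ b i) * (-1:ℚ) ^ ((∅:Finset (Fin k)).card - 1)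
        else 0) = 0 := by
      rw [if_neg]
      intro h
      obtain ⟨i, hi⟩ := hbne
      exact absurd (h i hi) (by simp)
    rw [Finset.sum_erase (f := fun S => if (∀ i, b i ≠ 0 → i ∈ S) then
      ((Nat.multinomial Finset.univ b : ℚ) * ∏ i, x i ^ b i) * (-1:ℚ) ^ (S.card - 1)
      else 0) (a := (∅ : Finset (Fin k))) ((Finset.univ : Finset (Fin k)).powerset) hzero]
    have := aux_superset_sum A hA
    calc (∑ S ∈ (Finset.univ : Finset (Fin k)).powerset,
          if (∀ i, b i ≠ 0 → i ∈ S) then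
            ((Nat.multinomial Finset.univ b : ℚ) * ∏ i, x i ^ b i) * (-1:ℚ) ^ (S.card - 1)
          else 0)
        = ((Nat.multinomial Finset.univ b : ℚ) * ∏ i, x i ^ b i) *
            ∑ S ∈ (Finset.univ : Finset (Fin k)).powerset,
              (if A ⊆ S then ((-1:ℚ) ^ (S.card - 1)) else 0) := by
          rw [Finset.mul_sum]
          refine Finset.sum_congr rfl fun S _ => ?_
          rw [mul_ite, mul_zero]
          congr 1
          · simp [hcond S]
      _ = _ := by
          rw [this]
          congr 1
          have : A = Finset.univ ↔ ∀ i, b i ≠ 0 := by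
            constructor
            · intro h i
              have : i ∈ A := h ▸ Finset.mem_univ i
              simpa [hAdef] using this
            · intro h
              apply Finset.eq_univ_of_forall
              intro i
              simp [hAdef, h i]
          simp only [this]
  rw [Finset.sum_congr rfl step2]
  -- now restrict to positive tuples and reindex
  have step3 : (∑ b ∈ Finset.piAntidiag (Finset.univ : Finset (Fin k)) (n + k),
      ((Nat.multinomial Finset.univ b : ℚ) * ∏ i, x i ^ b i) *
        (if (∀ i, b i ≠ 0) then (-1:ℚ) ^ (k - 1) else 0))
      = ∑ b ∈ (Finset.piAntidiag (Finset.univ : Finset (Fin k)) (n + k)).filter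
          (fun b => ∀ i, b i ≠ 0),
          (-1:ℚ) ^ (k - 1) * ((Nat.multinomial Finset.univ b : ℚ) * ∏ i, x i ^ b i) := by
    rw [Finset.sum_filter]
    refine Finset.sum_congr rfl fun b _ => ?_
    rw [mul_ite, mul_zero]
    split <;> ring
  rw [step3]
  have step4 : (∑ b ∈ (Finset.piAntidiag (Finset.univ : Finset (Fin k)) (n + k)).filter
          (fun b => ∀ i, b i ≠ 0),
          (-1:ℚ) ^ (k - 1) * ((Nat.multinomial Finset.univ b : ℚ) * ∏ i, x i ^ b i))
      = ∑ a ∈ Finset.Nat.antidiagonalTuple k n,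
          (-1:ℚ) ^ (k - 1) *
            ((Nat.multinomial Finset.univ (fun i => a i + 1) : ℚ) * ∏ i, x i ^ (a i + 1)) := by
    refine Finset.sum_nbij' (fun b j => b j - 1) (fun a j => a j + 1) ?_ ?_ ?_ ?_ ?_
    · intro b hb
      simp only [mem_filter, Finset.mem_piAntidiag] at hb
      obtain ⟨⟨hsum, -⟩, hpos⟩ := hb
      rw [Finset.Nat.mem_antidiagonalTuple]
      show ∑ j, (b j - 1) = n
      have h1 : ∑ j, (b j - 1 + 1) = ∑ j, b j := by
        refine Finset.sum_congr rfl fun j _ => ?_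
        have := hpos j
        omega
      rw [Finset.sum_add_distrib] at h1
      simp only [Finset.sum_const, Finset.card_univ, Fintype.card_fin, smul_eq_mul, mul_one] at h1
      have hsum' : ∑ j, b j = n + k := hsum
      omega
    · intro a ha
      rw [Finset.Nat.mem_antidiagonalTuple] at ha
      simp only [mem_filter, Finset.mem_piAntidiag]
      refine ⟨⟨?_, by simp⟩, fun i => by omega⟩
      rw [Finset.sum_add_distrib, ha]
      simp [Finset.card_univ]
    · intro b hb
      simp only [mem_filter] at hb
      funext j
      show b j - 1 + 1 = b j
      have := hb.2 j
      omega
    · intro a ha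
      funext j
      show a j + 1 - 1 = a j
      omega
    · intro b hb
      simp only [mem_filter] at hb
      have hb3 : ∀ j, b j - 1 + 1 = b j := fun j => by have := hb.2 j; omega
      simp only [hb3]
  rw [step4]
  have step5 : ∀ a ∈ Finset.Nat.antidiagonalTuple k n,
      (-1:ℚ) ^ (k - 1) *
        ((Nat.multinomial Finset.univ (fun i => a i + 1) : ℚ) * ∏ i, x i ^ (a i + 1))
      = (-1:ℚ) ^ (k + 1) * (((n + k).factorial : ℚ) / (n.factorial : ℚ)) * (∏ j, x j) *
          (((n.factorial : ℚ) / ∏ i, ((a i).factorial : ℚ)) * ∏ i, x i ^ (a i) / (a i + 1)) := by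
    intro a ha
    rw [Finset.Nat.mem_antidiagonalTuple] at ha
    rw [aux_term x a ha]
    have hpow : (-1:ℚ) ^ (k - 1) = (-1:ℚ) ^ (k + 1) := by
      have : k + 1 = (k - 1) + 2 := by omega
      rw [this, pow_add]
      norm_num
    rw [hpow]
    ring
  rw [Finset.sum_congr rfl step5, ← Finset.mul_sum]

theorem stmt7 (n k : ℕ) (hk : 1 ≤ k) (x : Fin k → ℚ) :
    Pn (n + k) x =
      (-1 : ℚ) ^ (k + 1) * (((n + k).factorial : ℚ) / (n.factorial : ℚ)) * (∏ j, x j) *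
        ∑ a ∈ Finset.Nat.antidiagonalTuple k n,
          ((n.factorial : ℚ) / ∏ i, ((a i).factorial : ℚ)) * ∏ i, x i ^ (a i) / (a i + 1) := by
  exact stmt7' n k hk x
end

section
/- Let n ≥ 1, k ≥ 1 and x = (x_1,…,x_k) ∈ ℚ^k. If n is odd, then f_n(x) = Σ_{j=1}^n (−1)^{j+1} C(n,j) f_1(x)^j f_{n−j}(x). If n is even, then f_n(x) = Σ_{j=1}^n (−1)^{j+1} C(n,j) f_1(x)^j f_{n−j}(x) + ũ_n(x)/((n+1)·2^n), where ũ_n is as defined in the context (for n = 2t). -/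
open Finset PowerSeries
open scoped PowerSeries

namespace Stmt10

noncomputable def B : ℚ⟦X⟧ := bernoulliPowerSeries ℚ
noncomputable def E : ℚ⟦X⟧ := PowerSeries.exp ℚ

lemma coeff_B (n : ℕ) : coeff n B = bernoulli n / n.factorial := by
  simp [B, bernoulliPowerSeries, coeff_mk]

lemma coeff_E (n : ℕ) : coeff n E = 1 / n.factorial := by
  simp [E, PowerSeries.coeff_exp]

lemma dE : d⁄dX ℚ E = E := by
  ext n
  rw [coeff_derivative, coeff_E, coeff_E, Nat.factorial_succ]
  have h1 : (n.factorial : ℚ) ≠ 0 := Nat.cast_ne_zero.2 n.factorial_ne_zero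
  have h2 : ((n+1 : ℕ) : ℚ) ≠ 0 := Nat.cast_ne_zero.2 n.succ_ne_zero
  field_simp
  push_cast
  ring

lemma BE : B * (E - 1) = X := bernoulliPowerSeries_mul_exp_sub_one ℚ

lemma dBE : d⁄dX ℚ B * (E - 1) + B * E = 1 := by
  have h := congrArg (d⁄dX ℚ) BE
  rw [Derivation.leibniz, derivative_X, map_sub, dE, Derivation.map_one_eq_zero, sub_zero,
    smul_eq_mul, smul_eq_mul] at h
  linear_combination h

lemma keyB : X * d⁄dX ℚ B + X * B + B^2 = B := by
  linear_combination B * dBE - (d⁄dX ℚ B + B) * BE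

lemma AB : rescale (-1 : ℚ) B = B + X := by
  ext n
  rw [coeff_rescale, map_add, coeff_B, coeff_X]
  match n with
  | 0 => norm_num
  | 1 => norm_num [bernoulli_one]
  | (m+2) =>
    rcases Nat.even_or_odd (m+2) with he | ho
    · rw [he.neg_one_pow, if_neg (by omega)]; ring
    · have hb : bernoulli (m+2) = 0 := by
        have := bernoulli'_eq_zero_of_odd ho (by omega)
        rw [bernoulli_eq_bernoulli'_of_ne_one (by omega), this]
      rw [hb, if_neg (by omega)]; ring

lemma d_rescale_E (c : ℚ) : d⁄dX ℚ (rescale c E) = C c * rescale c E := by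
  ext n
  rw [coeff_derivative, coeff_rescale, coeff_C_mul, coeff_rescale, coeff_E, coeff_E,
    Nat.factorial_succ, pow_succ]
  have h1 : (n.factorial : ℚ) ≠ 0 := Nat.cast_ne_zero.2 n.factorial_ne_zero
  have h2 : ((n+1 : ℕ) : ℚ) ≠ 0 := Nat.cast_ne_zero.2 n.succ_ne_zero
  push_cast
  field_simp

lemma rescale_E_mul (a b : ℚ) : rescale a E * rescale b E = rescale (a+b) E :=
  exp_mul_exp_eq_exp_add a b

noncomputable def H : ℚ⟦X⟧ := (B + X) * rescale (-(2⁻¹:ℚ)) E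

lemma H_even : rescale (-1:ℚ) H = H := by
  have h1 : rescale (-1:ℚ) H = B * rescale (2⁻¹:ℚ) E := by
    rw [H, map_mul, map_add, AB, rescale_rescale]
    have : rescale (-1:ℚ) (X : ℚ⟦X⟧) = -X := by
      ext n; rw [coeff_rescale, coeff_X, map_neg, coeff_X]; split_ifs with h <;> simp [h]
    rw [this]
    norm_num
  have hEE : E * rescale (-(2⁻¹:ℚ)) E = rescale (2⁻¹:ℚ) E := by
    have h2 : rescale (1:ℚ) E * rescale (-(2⁻¹:ℚ)) E = rescale (2⁻¹:ℚ) E := by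
      rw [rescale_E_mul]; norm_num
    rw [rescale_one] at h2; simpa using h2
  rw [h1, H]
  linear_combination (rescale (-(2⁻¹:ℚ)) E) * BE - B * hEE

lemma H_ode : X * d⁄dX ℚ H = (1 - C 2⁻¹ * X - B) * H := by
  have hd : d⁄dX ℚ H = (d⁄dX ℚ B + 1) * rescale (-(2⁻¹:ℚ)) E
      + (B + X) * (C (-(2⁻¹:ℚ)) * rescale (-(2⁻¹:ℚ)) E) := by
    rw [H, Derivation.leibniz, d_rescale_E, map_add, derivative_X, smul_eq_mul, smul_eq_mul]
    ring
  have hC : (C (-(2⁻¹:ℚ))) = - C (2⁻¹:ℚ) := by rw [map_neg]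
  rw [hd, hC, H]
  linear_combination (rescale (-(2⁻¹:ℚ)) E) * keyB

lemma coeff_zero_H : coeff 0 H = 1 := by
  have h1 : coeff 0 (B + X) = 1 := by
    rw [map_add, coeff_B, coeff_X]; norm_num
  have h2 : coeff 0 (rescale (-(2⁻¹:ℚ)) E) = 1 := by
    rw [coeff_rescale, coeff_E]; norm_num
  rw [coeff_zero_eq_constantCoeff_apply] at h1 h2 ⊢
  rw [H, map_mul, h1, h2, mul_one]

/-- `exp (c * X^m)` as a power series. -/
noncomputable def ExpP (c : ℚ) (m : ℕ) : ℚ⟦X⟧ :=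
  PowerSeries.mk fun n => if m ∣ n then c ^ (n / m) / (n / m).factorial else 0

lemma coeff_ExpP (c : ℚ) (m n : ℕ) :
    coeff n (ExpP c m) = if m ∣ n then c ^ (n / m) / (n / m).factorial else 0 :=
  coeff_mk _ _

lemma coeff_zero_ExpP (c : ℚ) (m : ℕ) : coeff 0 (ExpP c m) = 1 := by
  rw [coeff_ExpP, if_pos (dvd_zero m)]
  simp

lemma ExpP_add (c d : ℚ) (m : ℕ) (hm : m ≠ 0) :
    ExpP (c + d) m = ExpP c m * ExpP d m := by
  ext n
  rw [coeff_mul]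
  by_cases h : m ∣ n
  · obtain ⟨q, rfl⟩ := h
    have hq : ∀ p : ℕ × ℕ, p ∈ Finset.HasAntidiagonal.antidiagonal q →
        ((m * p.1, m * p.2) : ℕ × ℕ) ∈ Finset.HasAntidiagonal.antidiagonal (m * q) := by
      intro p hp
      rw [Finset.HasAntidiagonal.mem_antidiagonal] at hp ⊢
      rw [← Nat.mul_add, hp]
    rw [← Finset.sum_subset (s₁ := (Finset.HasAntidiagonal.antidiagonal q).image
        (fun p => (m * p.1, m * p.2)))]
    · rw [Finset.sum_image (by
        intro p hp p' hp' he
        simp only [Prod.mk.injEq] at he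
        ext
        · exact Nat.eq_of_mul_eq_mul_left (Nat.pos_of_ne_zero hm) he.1
        · exact Nat.eq_of_mul_eq_mul_left (Nat.pos_of_ne_zero hm) he.2)]
      rw [coeff_ExpP, if_pos ⟨q, rfl⟩, Nat.mul_div_cancel_left _ (Nat.pos_of_ne_zero hm)]
      rw [Finset.Nat.sum_antidiagonal_eq_sum_range_succ
        (f := fun a b => coeff (m*a) (ExpP c m) * coeff (m*b) (ExpP d m))]
      rw [add_pow, Finset.sum_div]
      apply Finset.sum_congr rfl
      intro a ha
      have haq : a ≤ q := by
        rw [Finset.mem_range] at ha; omega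
      rw [coeff_ExpP, coeff_ExpP, if_pos ⟨a, rfl⟩, if_pos ⟨q - a, rfl⟩,
        Nat.mul_div_cancel_left _ (Nat.pos_of_ne_zero hm),
        Nat.mul_div_cancel_left _ (Nat.pos_of_ne_zero hm),
        Nat.cast_choose ℚ haq]
      have h1 : ((a.factorial : ℚ)) ≠ 0 := Nat.cast_ne_zero.2 a.factorial_ne_zero
      have h2 : (((q-a).factorial : ℚ)) ≠ 0 := Nat.cast_ne_zero.2 (q-a).factorial_ne_zero
      have h3 : ((q.factorial : ℚ)) ≠ 0 := Nat.cast_ne_zero.2 q.factorial_ne_zero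
      field_simp
    · intro p hp
      rw [Finset.mem_image] at hp
      obtain ⟨p', hp', rfl⟩ := hp
      exact hq p' hp'
    · intro p hp hnp
      by_cases h1 : m ∣ p.1
      · by_cases h2 : m ∣ p.2
        · exfalso
          apply hnp
          obtain ⟨a, ha⟩ := h1
          obtain ⟨b, hb⟩ := h2
          rw [Finset.mem_image]
          refine ⟨(a, b), ?_, by rw [← ha, ← hb]⟩
          rw [Finset.HasAntidiagonal.mem_antidiagonal] at hp ⊢
          have hmq : m * (a + b) = m * q := by rw [Nat.mul_add, ← ha, ← hb, hp]
          exact Nat.eq_of_mul_eq_mul_left (Nat.pos_of_ne_zero hm) hmq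
        · rw [coeff_ExpP d m p.2, if_neg h2, mul_zero]
      · rw [coeff_ExpP c m p.1, if_neg h1, zero_mul]
  · rw [coeff_ExpP, if_neg h]
    symm
    apply Finset.sum_eq_zero
    intro p hp
    rw [Finset.HasAntidiagonal.mem_antidiagonal] at hp
    rcases (em (m ∣ p.1)) with h1 | h1
    · rcases (em (m ∣ p.2)) with h2 | h2
      · exact absurd (hp ▸ Nat.dvd_add h1 h2) h
      · rw [coeff_ExpP d m p.2, if_neg h2, mul_zero]
    · rw [coeff_ExpP c m p.1, if_neg h1, zero_mul]

lemma ExpP_zero (m : ℕ) (hm : m ≠ 0) : ExpP 0 m = 1 := by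
  ext n
  rw [coeff_ExpP, coeff_one]
  rcases n with _ | n
  · simp
  · have hne : ¬ (n + 1 = 0) := n.succ_ne_zero
    rw [if_neg hne]
    by_cases h : m ∣ n + 1
    · rw [if_pos h]
      have : (n+1)/m ≠ 0 := by
        obtain ⟨q, hq⟩ := h
        rcases q with _ | q
        · omega
        · rw [hq, Nat.mul_div_cancel_left _ (Nat.pos_of_ne_zero hm)]; omega
      rw [zero_pow this, zero_div]
    · rw [if_neg h]

lemma ExpP_sum {ι : Type*} [DecidableEq ι] (s : Finset ι) (c : ι → ℚ) (m : ℕ) (hm : m ≠ 0) :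
    ExpP (∑ i ∈ s, c i) m = ∏ i ∈ s, ExpP (c i) m := by
  induction s using Finset.induction_on with
  | empty => simpa using ExpP_zero m hm
  | @insert a s h ih =>
    rw [Finset.sum_insert h, Finset.prod_insert h, ExpP_add _ _ _ hm, ih]

lemma rescale_ExpP (y c : ℚ) (m : ℕ) (hm : m ≠ 0) :
    rescale y (ExpP c m) = ExpP (c * y ^ m) m := by
  ext n
  rw [coeff_rescale, coeff_ExpP, coeff_ExpP]
  by_cases h : m ∣ n
  · obtain ⟨q, rfl⟩ := h
    rw [if_pos ⟨q, rfl⟩, if_pos ⟨q, rfl⟩, mul_pow, ← pow_mul,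
      Nat.mul_div_cancel_left _ (Nat.pos_of_ne_zero hm)]
    ring
  · rw [if_neg h, if_neg h, mul_zero]

lemma ExpP_ode (c : ℚ) (m : ℕ) (hm : m ≠ 0) :
    X * d⁄dX ℚ (ExpP c m) = (C ((m : ℚ) * c) * X ^ m) * ExpP c m := by
  ext n
  rcases n with _ | n
  · rw [coeff_zero_X_mul, mul_assoc, coeff_C_mul,
      coeff_X_pow_mul' (ExpP c m) m 0, if_neg (by omega), mul_zero]
  · rw [coeff_succ_X_mul, coeff_derivative, coeff_ExpP, mul_assoc, coeff_C_mul]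
    by_cases h : m ≤ n + 1
    · obtain ⟨d, hd⟩ : ∃ d, n + 1 = m + d := ⟨n + 1 - m, by omega⟩
      have hcast : ((n : ℚ) + 1) = ((m : ℚ) + d) := by
        have h' := congrArg (Nat.cast : ℕ → ℚ) hd
        push_cast at h'
        linarith
      rw [hd, hcast, coeff_X_pow_mul' (ExpP c m) m (m+d), if_pos (Nat.le_add_right m d),
        Nat.add_sub_cancel_left, coeff_ExpP]
      by_cases h2 : m ∣ d
      · obtain ⟨e, rfl⟩ := h2
        have h3 : m ∣ m + m * e := ⟨e + 1, by ring⟩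
        rw [if_pos h3, if_pos ⟨e, rfl⟩, Nat.mul_div_cancel_left _ (Nat.pos_of_ne_zero hm)]
        have h4 : (m + m * e) / m = e + 1 := by
          rw [show m + m * e = m * (e + 1) by ring, Nat.mul_div_cancel_left _ (Nat.pos_of_ne_zero hm)]
        rw [h4, Nat.factorial_succ, pow_succ]
        have h5 : ((e.factorial : ℚ)) ≠ 0 := Nat.cast_ne_zero.2 e.factorial_ne_zero
        have h6 : ((e : ℚ) + 1) ≠ 0 := by positivity
        push_cast
        field_simp
        ring
      · have h3 : ¬ m ∣ m + d := by
          intro hd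
          exact h2 ((Nat.dvd_add_right ⟨1, (mul_one m).symm⟩).mp hd)
        rw [if_neg h3, if_neg h2, zero_mul, mul_zero]
    · rw [coeff_X_pow_mul' (ExpP c m) m (n+1), if_neg h, mul_zero]
      have h3 : ¬ m ∣ n + 1 := fun hd => h (Nat.le_of_dvd (by omega) hd)
      rw [if_neg h3, zero_mul]

lemma prod_ode {ι : Type*} [DecidableEq ι] (s : Finset ι) (c : ι → ℚ) (m : ι → ℕ)
    (hm : ∀ j ∈ s, m j ≠ 0) :
    X * d⁄dX ℚ (∏ j ∈ s, ExpP (c j) (m j)) =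
      (∑ j ∈ s, C ((m j : ℚ) * c j) * X ^ (m j)) * ∏ j ∈ s, ExpP (c j) (m j) := by
  induction s using Finset.induction_on with
  | empty => simp
  | @insert a s ha ih =>
    rw [Finset.prod_insert ha, Finset.sum_insert ha, Derivation.leibniz, smul_eq_mul, smul_eq_mul]
    have ih' := ih (fun j hj => hm j (Finset.mem_insert_of_mem hj))
    have ha' := ExpP_ode (c a) (m a) (hm a (Finset.mem_insert_self a s))
    linear_combination (ExpP (c a) (m a)) * ih' + (∏ j ∈ s, ExpP (c j) (m j)) * ha'

lemma ode_unique (P Q D1 D2 : ℚ⟦X⟧) (hP : X * d⁄dX ℚ P = D1 * P) (hQ : X * d⁄dX ℚ Q = D2 * Q)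
    (h0 : coeff 0 P = coeff 0 Q) (hD0 : coeff 0 D1 = 0) (hD0' : coeff 0 D2 = 0)
    (N : ℕ) (hD : ∀ m ≤ N, coeff m D1 = coeff m D2) :
    ∀ n ≤ N, coeff n P = coeff n Q := by
  intro n
  induction n using Nat.strong_induction_on with
  | _ n ih =>
    intro hn
    rcases n with _ | n
    · exact h0
    · have e1 := congrArg (coeff (n+1)) hP
      have e2 := congrArg (coeff (n+1)) hQ
      rw [coeff_succ_X_mul, coeff_derivative, coeff_mul] at e1 e2
      have hsum : ∑ p ∈ Finset.HasAntidiagonal.antidiagonal (n+1), coeff p.1 D1 * coeff p.2 P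
          = ∑ p ∈ Finset.HasAntidiagonal.antidiagonal (n+1), coeff p.1 D2 * coeff p.2 Q := by
        apply Finset.sum_congr rfl
        intro p hp
        rw [Finset.HasAntidiagonal.mem_antidiagonal] at hp
        rcases Nat.eq_zero_or_pos p.1 with h1 | h1
        · rw [h1, hD0, hD0', zero_mul, zero_mul]
        · rw [hD p.1 (by omega), ih p.2 (by omega) (by omega)]
      have hne : ((n:ℚ) + 1) ≠ 0 := by positivity
      have := e1.trans (hsum.trans e2.symm)
      exact mul_right_cancel₀ hne this

lemma bernoulli_odd (m : ℕ) (ho : Odd m) (h1 : 1 < m) : bernoulli m = 0 := by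
  rw [bernoulli_eq_bernoulli'_of_ne_one (by omega), bernoulli'_eq_zero_of_odd ho h1]

noncomputable def bq (j : ℕ) : ℚ := bernoulli (2*j) / ((2*j) * (2*j).factorial)

lemma coeff_D1 (m : ℕ) :
    coeff m ((1 : ℚ⟦X⟧) - C 2⁻¹ * X - B) =
      if 2 ≤ m then -(bernoulli m / m.factorial) else 0 := by
  rw [map_sub, map_sub, coeff_C_mul, coeff_X, coeff_B, coeff_one]
  match m with
  | 0 => norm_num
  | 1 => norm_num [bernoulli_one]
  | (m+2) =>
    rw [if_neg (by omega), if_neg (by omega), if_pos (by omega)]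
    ring

lemma coeff_D2 (t m : ℕ) (hm : m ≤ 2*t) :
    coeff m (∑ j ∈ Finset.Icc 1 t, C (((2*j : ℕ) : ℚ) * (-(bq j))) * X ^ (2*j)) =
      if 2 ≤ m then -(bernoulli m / m.factorial) else 0 := by
  rw [map_sum]
  have hterm : ∀ j : ℕ, coeff m (C (((2*j : ℕ) : ℚ) * (-(bq j))) * X ^ (2*j)) =
      if m = 2*j then ((2*j : ℕ) : ℚ) * (-(bq j)) else 0 := by
    intro j
    rw [coeff_C_mul, coeff_X_pow]
    split_ifs <;> simp
  rcases Nat.lt_or_ge m 2 with h2 | h2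
  · rw [if_neg (by omega)]
    apply Finset.sum_eq_zero
    intro j hj
    rw [Finset.mem_Icc] at hj
    rw [hterm j, if_neg (by omega)]
  · rw [if_pos h2]
    rcases Nat.even_or_odd m with he | ho
    · obtain ⟨j0, hj0⟩ := he
      have hj0' : j0 ∈ Finset.Icc 1 t := by rw [Finset.mem_Icc]; omega
      rw [Finset.sum_eq_single_of_mem j0 hj0']
      · rw [hterm j0, if_pos (by omega)]
        have hmeq : m = 2 * j0 := by omega
        subst hmeq
        have h1j : 1 ≤ j0 := by
          rw [Finset.mem_Icc] at hj0'; omega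
        have h2j : (2 * (j0:ℚ)) ≠ 0 := by positivity
        have hf : (((2*j0).factorial : ℕ) : ℚ) ≠ 0 := Nat.cast_ne_zero.2 (2*j0).factorial_ne_zero
        rw [bq]
        push_cast
        field_simp
      · intro j hj hne
        rw [hterm j, if_neg (by omega)]
    · rw [bernoulli_odd m ho (by omega)]
      rw [show -((0:ℚ) / m.factorial) = 0 by norm_num]
      apply Finset.sum_eq_zero
      intro j hj
      rw [hterm j, if_neg (by rcases ho with ⟨r, hr⟩; omega)]

lemma coeff_zero_prod_ExpP {ι : Type*} (s : Finset ι) (c : ι → ℚ) (m : ι → ℕ) :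
    coeff 0 (∏ j ∈ s, ExpP (c j) (m j)) = 1 := by
  rw [coeff_zero_eq_constantCoeff_apply, map_prod]
  apply Finset.prod_eq_one
  intro j _
  rw [← coeff_zero_eq_constantCoeff_apply, coeff_zero_ExpP]

lemma H_eq_K (t : ℕ) :
    ∀ n ≤ 2*t, coeff n H = coeff n (∏ j ∈ Finset.Icc 1 t, ExpP (-(bq j)) (2*j)) := by
  apply ode_unique _ _ ((1 : ℚ⟦X⟧) - C 2⁻¹ * X - B)
    (∑ j ∈ Finset.Icc 1 t, C (((2*j : ℕ) : ℚ) * (-(bq j))) * X ^ (2*j))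
  · exact H_ode
  · apply prod_ode
    intro j hj
    rw [Finset.mem_Icc] at hj
    omega
  · rw [coeff_zero_H, coeff_zero_prod_ExpP]
  · rw [coeff_D1]; norm_num
  · rw [coeff_D2 t 0 (by omega)]; norm_num
  · intro m hm
    rw [coeff_D1, coeff_D2 t m hm]

lemma coeff_rescale_B (y : ℚ) (n : ℕ) :
    coeff n (rescale y B) = y ^ n * (bernoulli n / n.factorial) := by
  rw [coeff_rescale, coeff_B]

lemma fpoly_eq_coeff {k : ℕ} (n : ℕ) (x : Fin k → ℚ) :
    fpoly n x = (n.factorial : ℚ) * coeff n (∏ i, rescale (-(x i)) B) := by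
  rw [coeff_prod, Finset.mul_sum, fpoly]
  refine Finset.sum_bij' (i := fun a _ => Finsupp.equivFunOnFinite.symm a)
    (j := fun l _ => (l : Fin k → ℕ)) ?_ ?_ ?_ ?_ ?_
  · intro a ha
    rw [Finset.Nat.mem_antidiagonalTuple] at ha
    rw [Finset.mem_finsuppAntidiag]
    constructor
    · simpa using ha
    · exact Finset.subset_univ _
  · intro l hl
    rw [Finset.mem_finsuppAntidiag] at hl
    rw [Finset.Nat.mem_antidiagonalTuple]
    simpa using hl.1
  · intro a ha
    rfl
  · intro l hl
    exact Finsupp.equivFunOnFinite_symm_coe l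
  · intro a ha
    have hterm : ∀ i : Fin k, coeff ((Finsupp.equivFunOnFinite.symm a) i) (rescale (-(x i)) B)
        = ((-1) ^ (a i) * bernoulli (a i) * x i ^ (a i)) / (a i).factorial := by
      intro i
      simp only [Finsupp.coe_equivFunOnFinite_symm]
      rw [coeff_rescale_B, neg_pow]
      ring
    rw [Finset.prod_congr rfl (fun i _ => hterm i), Finset.prod_div_distrib]
    have hfac : (∏ i, ((a i).factorial : ℚ)) ≠ 0 := by
      apply Finset.prod_ne_zero_iff.2
      intro i _
      exact Nat.cast_ne_zero.2 (a i).factorial_ne_zero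
    field_simp

lemma coeff_one_prod {ι : Type*} (s : Finset ι) (f : ι → ℚ⟦X⟧)
    (h0 : ∀ i ∈ s, coeff 0 (f i) = 1) :
    coeff 1 (∏ i ∈ s, f i) = ∑ i ∈ s, coeff 1 (f i) := by
  classical
  induction s using Finset.induction_on with
  | empty => simp
  | @insert a s ha ih =>
    rw [Finset.prod_insert ha, Finset.sum_insert ha, coeff_mul]
    rw [show Finset.HasAntidiagonal.antidiagonal 1 = {(0,1),(1,0)} by rfl]
    rw [Finset.sum_insert (by simp), Finset.sum_singleton]
    have hprod0 : coeff 0 (∏ i ∈ s, f i) = ∏ i ∈ s, coeff 0 (f i) := by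
      simp [coeff_zero_eq_constantCoeff_apply, map_prod]
    rw [h0 a (Finset.mem_insert_self a s), hprod0,
      Finset.prod_congr rfl (fun i hi => h0 i (Finset.mem_insert_of_mem hi)),
      Finset.prod_const_one, ih (fun i hi => h0 i (Finset.mem_insert_of_mem hi))]
    ring

lemma fpoly_one {k : ℕ} (x : Fin k → ℚ) : fpoly 1 x = ∑ i, x i / 2 := by
  rw [fpoly_eq_coeff, coeff_one_prod]
  · rw [Nat.factorial_one, Nat.cast_one, one_mul]
    apply Finset.sum_congr rfl
    intro i _
    rw [coeff_rescale_B, bernoulli_one, Nat.factorial_one]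
    norm_num
    ring
  · intro i _
    rw [coeff_rescale_B]
    norm_num

lemma rescale_sum_E {ι : Type*} (s : Finset ι) (c : ι → ℚ) :
    rescale (∑ i ∈ s, c i) E = ∏ i ∈ s, rescale (c i) E := by
  classical
  induction s using Finset.induction_on with
  | empty =>
    rw [Finset.sum_empty, Finset.prod_empty, rescale_zero]
    show C (constantCoeff E) = 1
    rw [show constantCoeff E = 1 from constantCoeff_exp, map_one]
  | @insert a s ha ih =>
    rw [Finset.sum_insert ha, Finset.prod_insert ha, ← ih, rescale_E_mul]

lemma rescale_H (y : ℚ) : rescale y H = rescale (-y) B * rescale (-(y/2)) E := by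
  rw [H, ← AB, map_mul, rescale_rescale, rescale_rescale,
    show (-1:ℚ) * y = -y by ring, show (-2⁻¹:ℚ) * y = -(y/2) by ring]

lemma SP_eq {k : ℕ} (x : Fin k → ℚ) :
    rescale (-(fpoly 1 x)) E * ∏ i, rescale (-(x i)) B = ∏ i, rescale (x i) H := by
  have h1 : rescale (-(fpoly 1 x)) E = ∏ i, rescale (-((x i)/2)) E := by
    rw [fpoly_one, show -(∑ i, x i/2 : ℚ) = ∑ i, -((x i)/2) by
      rw [← Finset.sum_neg_distrib], rescale_sum_E]
  rw [h1, ← Finset.prod_mul_distrib]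
  apply Finset.prod_congr rfl
  intro i _
  rw [rescale_H, mul_comm]

lemma SP_even {k : ℕ} (x : Fin k → ℚ) :
    rescale (-1 : ℚ) (∏ i, rescale (x i) H) = ∏ i, rescale (x i) H := by
  rw [map_prod]
  apply Finset.prod_congr rfl
  intro i _
  rw [rescale_rescale, show x i * -1 = -1 * x i by ring, ← rescale_rescale, H_even]

lemma coeff_odd_SP {k : ℕ} (x : Fin k → ℚ) (n : ℕ) (hn : Odd n) :
    coeff n (∏ i, rescale (x i) H) = 0 := by
  have h := congrArg (coeff n) (SP_even x)
  rw [coeff_rescale, hn.neg_one_pow] at h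
  linarith

lemma gsum {k : ℕ} (n : ℕ) (x : Fin k → ℚ) :
    (n.factorial : ℚ) * coeff n (∏ i, rescale (x i) H) =
      ∑ j ∈ Finset.range (n+1), (-1)^j * (n.choose j : ℚ) * (fpoly 1 x)^j * fpoly (n-j) x := by
  rw [← SP_eq, coeff_mul, Finset.mul_sum]
  rw [Finset.Nat.sum_antidiagonal_eq_sum_range_succ (f := fun a b =>
    (n.factorial : ℚ) * (coeff a (rescale (-(fpoly 1 x)) E) *
      coeff b (∏ i, rescale (-(x i)) B)))]
  apply Finset.sum_congr rfl
  intro j hj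
  have hjn : j ≤ n := by rw [Finset.mem_range] at hj; omega
  rw [coeff_rescale, coeff_E, fpoly_eq_coeff (n - j) x, Nat.cast_choose ℚ hjn, neg_pow]
  have h1 : ((j.factorial : ℕ) : ℚ) ≠ 0 := Nat.cast_ne_zero.2 j.factorial_ne_zero
  have h2 : (((n-j).factorial : ℕ) : ℚ) ≠ 0 := Nat.cast_ne_zero.2 (n-j).factorial_ne_zero
  field_simp

lemma coeff_prod_congr {ι : Type*} [DecidableEq ι] (s : Finset ι) (f g : ι → ℚ⟦X⟧) (n : ℕ)
    (h : ∀ i ∈ s, ∀ m ≤ n, coeff m (f i) = coeff m (g i)) :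
    coeff n (∏ i ∈ s, f i) = coeff n (∏ i ∈ s, g i) := by
  rw [coeff_prod, coeff_prod]
  apply Finset.sum_congr rfl
  intro l hl
  rw [Finset.mem_finsuppAntidiag] at hl
  apply Finset.prod_congr rfl
  intro i hi
  apply h i hi
  rw [← hl.1]
  exact Finset.single_le_sum (f := fun i => l i) (fun _ _ => Nat.zero_le _) hi

lemma prod_rescale_K {k : ℕ} (x : Fin k → ℚ) (t : ℕ) :
    (∏ i, rescale (x i) (∏ j ∈ Finset.Icc 1 t, ExpP (-(bq j)) (2*j))) =
      ∏ j ∈ Finset.Icc 1 t, ExpP (-(bq j) * psum (2*j) x) (2*j) := by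
  have h2j : ∀ j ∈ Finset.Icc 1 t, (2*j : ℕ) ≠ 0 := fun j hj => by
    rw [Finset.mem_Icc] at hj; omega
  have step1 : ∀ i : Fin k, rescale (x i) (∏ j ∈ Finset.Icc 1 t, ExpP (-(bq j)) (2*j)) =
      ∏ j ∈ Finset.Icc 1 t, ExpP (-(bq j) * (x i)^(2*j)) (2*j) := by
    intro i
    rw [map_prod]
    exact Finset.prod_congr rfl (fun j hj => rescale_ExpP (x i) _ _ (h2j j hj))
  rw [Finset.prod_congr rfl (fun i _ => step1 i), Finset.prod_comm]
  apply Finset.prod_congr rfl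
  intro j hj
  rw [← ExpP_sum _ _ _ (h2j j hj)]
  congr 1
  rw [psum, Finset.mul_sum]

lemma part_mem_Icc {t : ℕ} (μ : Nat.Partition t) {j : ℕ} (hj : j ∈ μ.parts) :
    j ∈ Finset.Icc 1 t := by
  rw [Finset.mem_Icc]
  refine ⟨μ.parts_pos hj, ?_⟩
  have h := Multiset.single_le_sum (fun y _ => Nat.zero_le y) j hj
  rwa [μ.parts_sum] at h

lemma count_eq_zero_outside {t : ℕ} (μ : Nat.Partition t) {j : ℕ}
    (hj : j ∉ Finset.Icc 1 t) : μ.parts.count j = 0 :=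
  Multiset.count_eq_zero.2 (fun h => hj (part_mem_Icc μ h))

lemma partition_count_sum (t : ℕ) (μ : Nat.Partition t) :
    ∑ j ∈ Finset.Icc 1 t, j * μ.parts.count j = t := by
  have h1 : μ.parts.sum = ∑ a ∈ μ.parts.toFinset, μ.parts.count a • a := by
    conv_lhs => rw [← Multiset.map_id μ.parts]
    exact Finset.sum_multiset_map_count μ.parts id
  have h2 : ∑ a ∈ μ.parts.toFinset, μ.parts.count a • a =
      ∑ j ∈ Finset.Icc 1 t, μ.parts.count j • j := by
    apply Finset.sum_subset
    · intro a ha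
      exact part_mem_Icc μ (Multiset.mem_toFinset.1 ha)
    · intro j _ hnotin
      rw [Multiset.count_eq_zero.2 (fun h => hnotin (Multiset.mem_toFinset.2 h)), zero_smul]
  have h3 := μ.parts_sum
  rw [h1, h2] at h3
  have h4 : ∑ j ∈ Finset.Icc 1 t, j * μ.parts.count j =
      ∑ j ∈ Finset.Icc 1 t, μ.parts.count j • j :=
    Finset.sum_congr rfl (fun j _ => by rw [smul_eq_mul, mul_comm])
  rw [h4, h3]

lemma multiset_sum_sum {ι : Type*} [DecidableEq ι] (s : Finset ι) (f : ι → Multiset ℕ) :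
    (∑ i ∈ s, f i).sum = ∑ i ∈ s, (f i).sum := by
  induction s using Finset.induction_on with
  | empty => simp
  | @insert a s ha ih => rw [Finset.sum_insert ha, Finset.sum_insert ha, Multiset.sum_add, ih]

/-- the partition associated to a divisible multiplicity vector -/
def toPart (t : ℕ) (l : ℕ →₀ ℕ) (hsum : ∑ j ∈ Finset.Icc 1 t, l j = 2*t)
    (hdvd : ∀ j ∈ Finset.Icc 1 t, 2*j ∣ l j) : Nat.Partition t where
  parts := ∑ j ∈ Finset.Icc 1 t, Multiset.replicate (l j / (2*j)) j
  parts_pos := by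
    intro i hi
    rw [Multiset.mem_sum] at hi
    obtain ⟨j, hj, hij⟩ := hi
    rw [Multiset.eq_of_mem_replicate hij]
    rw [Finset.mem_Icc] at hj
    omega
  parts_sum := by
    rw [multiset_sum_sum]
    have h1 : ∑ j ∈ Finset.Icc 1 t, (Multiset.replicate (l j / (2*j)) j).sum
        = ∑ j ∈ Finset.Icc 1 t, j * (l j / (2*j)) :=
      Finset.sum_congr rfl (fun j hj => by rw [Multiset.sum_replicate, smul_eq_mul, mul_comm])
    rw [h1]
    have h2 : ∑ j ∈ Finset.Icc 1 t, 2 * (j * (l j / (2*j))) = 2*t := by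
      rw [← hsum]
      apply Finset.sum_congr rfl
      intro j hj
      rw [← Nat.mul_assoc]
      exact Nat.mul_div_cancel' (hdvd j hj)
    rw [← Finset.mul_sum] at h2
    omega

lemma count_toPart (t : ℕ) (l : ℕ →₀ ℕ) (hsum : ∑ j ∈ Finset.Icc 1 t, l j = 2*t)
    (hdvd : ∀ j ∈ Finset.Icc 1 t, 2*j ∣ l j) (p : ℕ) :
    (toPart t l hsum hdvd).parts.count p =
      if p ∈ Finset.Icc 1 t then l p / (2*p) else 0 := by
  show Multiset.count p (∑ j ∈ Finset.Icc 1 t, Multiset.replicate (l j / (2*j)) j) = _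
  rw [Multiset.count_sum']
  have h1 : ∑ j ∈ Finset.Icc 1 t, Multiset.count p (Multiset.replicate (l j / (2*j)) j)
      = ∑ j ∈ Finset.Icc 1 t, if j = p then l j / (2*j) else 0 :=
    Finset.sum_congr rfl (fun j hj => Multiset.count_replicate p j _)
  rw [h1]
  exact Finset.sum_ite_eq' (Finset.Icc 1 t) p (fun j => l j / (2*j))

/-- multiplicity vector of a partition -/
noncomputable def toFun (t : ℕ) (μ : Nat.Partition t) : ℕ →₀ ℕ :=
  Finsupp.onFinset (Finset.Icc 1 t) (fun j => 2*j*(μ.parts.count j))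
    (fun j hj => part_mem_Icc μ (Multiset.count_ne_zero.mp
      (fun h => hj (show 2*j*(μ.parts.count j) = 0 by rw [h, Nat.mul_zero]))))

lemma toFun_apply (t : ℕ) (μ : Nat.Partition t) (j : ℕ) :
    (toFun t μ) j = 2*j*(μ.parts.count j) := rfl

lemma toFun_sum (t : ℕ) (μ : Nat.Partition t) :
    ∑ j ∈ Finset.Icc 1 t, (toFun t μ) j = 2*t := by
  have h1 : ∑ j ∈ Finset.Icc 1 t, (toFun t μ) j =
      2 * ∑ j ∈ Finset.Icc 1 t, j * μ.parts.count j := by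
    rw [Finset.mul_sum]
    exact Finset.sum_congr rfl (fun j _ => by rw [toFun_apply, Nat.mul_assoc])
  rw [h1, partition_count_sum]

lemma coeff_prod_ExpP_partition (t : ℕ) (c : ℕ → ℚ) :
    coeff (2*t) (∏ j ∈ Finset.Icc 1 t, ExpP (c j) (2*j)) =
      ∑ μ : Nat.Partition t, ∏ j ∈ Finset.Icc 1 t,
        (c j) ^ (μ.parts.count j) / ((μ.parts.count j).factorial : ℚ) := by
  rw [coeff_prod]
  rw [← Finset.sum_filter_of_ne (p := fun l => ∀ j ∈ Finset.Icc 1 t, 2*j ∣ l j)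
    (by
      intro l _ hne j hj
      by_contra hd
      exact hne (Finset.prod_eq_zero hj (by rw [coeff_ExpP, if_neg hd])))]
  have hmem : ∀ l ∈ (Finset.finsuppAntidiag (Finset.Icc 1 t) (2*t)).filter
      (fun l => ∀ j ∈ Finset.Icc 1 t, 2*j ∣ l j),
      (∑ j ∈ Finset.Icc 1 t, l j = 2*t) ∧ (l.support ⊆ Finset.Icc 1 t) ∧
        (∀ j ∈ Finset.Icc 1 t, 2*j ∣ l j) := by
    intro l hl
    rw [Finset.mem_filter, Finset.mem_finsuppAntidiag] at hl
    exact ⟨hl.1.1, hl.1.2, hl.2⟩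
  refine Finset.sum_bij'
    (i := fun l hl => toPart t l (hmem l hl).1 (hmem l hl).2.2)
    (j := fun μ _ => toFun t μ) ?_ ?_ ?_ ?_ ?_
  · intro l hl
    exact Finset.mem_univ _
  · intro μ _
    rw [Finset.mem_filter, Finset.mem_finsuppAntidiag]
    refine ⟨⟨toFun_sum t μ, Finsupp.support_onFinset_subset⟩, ?_⟩
    intro j hj
    rw [toFun_apply]
    exact Dvd.intro _ rfl
  · intro l hl
    apply Finsupp.ext
    intro p
    rw [toFun_apply, count_toPart]
    by_cases hp : p ∈ Finset.Icc 1 t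
    · rw [if_pos hp]
      exact Nat.mul_div_cancel' ((hmem l hl).2.2 p hp)
    · rw [if_neg hp, Nat.mul_zero]
      by_contra h
      exact hp ((hmem l hl).2.1 (Finsupp.mem_support_iff.2 (fun h0 => h h0.symm)))
  · intro μ _
    apply Nat.Partition.ext
    apply Multiset.ext.2
    intro p
    rw [count_toPart]
    by_cases hp : p ∈ Finset.Icc 1 t
    · rw [if_pos hp, toFun_apply]
      have h2p : 0 < 2*p := by rw [Finset.mem_Icc] at hp; omega
      rw [Nat.mul_div_cancel_left _ h2p]
    · rw [if_neg hp, count_eq_zero_outside μ hp]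
  · intro l hl
    apply Finset.prod_congr rfl
    intro j hj
    have h2j : 0 < 2*j := by rw [Finset.mem_Icc] at hj; omega
    rw [coeff_ExpP, if_pos ((hmem l hl).2.2 j hj), count_toPart, if_pos hj]

lemma ut2_eq {k : ℕ} (t : ℕ) (x : Fin k → ℚ) :
    ut2 t x = ((2*t+1).factorial : ℚ) * 4^t *
      ∑ μ : Nat.Partition t, ∏ j ∈ Finset.Icc 1 t,
        (-(bq j) * psum (2*j) x) ^ (μ.parts.count j) / ((μ.parts.count j).factorial : ℚ) := by
  rw [ut2, Finset.mul_sum]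
  apply Finset.sum_congr rfl
  intro μ _
  rw [phiU, mul_assoc, mul_assoc, mul_assoc, ← Finset.prod_mul_distrib]
  congr 1
  congr 1
  apply Finset.prod_congr rfl
  intro j _
  rw [show -(bq j) * psum (2*j) x = bq j * (-(psum (2*j) x)) by ring, mul_pow, bq]
  ring

end Stmt10

theorem stmt10 (n k : ℕ) (hn : 1 ≤ n) (hk : 1 ≤ k) (x : Fin k → ℚ) :
    (Odd n →
      fpoly n x =
        ∑ j ∈ Finset.Icc 1 n,
          (-1 : ℚ) ^ (j + 1) * (n.choose j : ℚ) * (fpoly 1 x) ^ j * fpoly (n - j) x) ∧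
    (∀ t : ℕ, n = 2 * t →
      fpoly n x =
        (∑ j ∈ Finset.Icc 1 n,
          (-1 : ℚ) ^ (j + 1) * (n.choose j : ℚ) * (fpoly 1 x) ^ j * fpoly (n - j) x) +
        ut2 t x / ((n + 1) * 2 ^ n)) := by
  have key : ∀ m : ℕ,
      ∑ j ∈ Finset.Icc 1 m, (-1:ℚ)^(j+1) * (m.choose j : ℚ) * (fpoly 1 x)^j * fpoly (m-j) x
        = fpoly m x - (m.factorial : ℚ) *
            PowerSeries.coeff m (∏ i, PowerSeries.rescale (x i) Stmt10.H) := by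
    intro m
    have hg := Stmt10.gsum m x
    have hsplit : ∑ j ∈ Finset.range (m+1),
        (-1:ℚ)^j * (m.choose j : ℚ) * (fpoly 1 x)^j * fpoly (m-j) x
        = fpoly m x + ∑ j ∈ Finset.Icc 1 m,
            (-1:ℚ)^j * (m.choose j : ℚ) * (fpoly 1 x)^j * fpoly (m-j) x := by
      rw [Finset.sum_range_succ', ← Finset.Ico_add_one_right_eq_Icc, Finset.sum_Ico_eq_sum_range]
      rw [add_comm]
      congr 1
      · norm_num
      · apply Finset.sum_congr (by norm_num)
        intro i _
        rw [add_comm 1 i]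
    have hneg : ∑ j ∈ Finset.Icc 1 m,
        (-1:ℚ)^(j+1) * (m.choose j : ℚ) * (fpoly 1 x)^j * fpoly (m-j) x
        = -∑ j ∈ Finset.Icc 1 m,
            (-1:ℚ)^j * (m.choose j : ℚ) * (fpoly 1 x)^j * fpoly (m-j) x := by
      rw [← Finset.sum_neg_distrib]
      apply Finset.sum_congr rfl
      intro j _
      rw [pow_succ]
      ring
    have hall := hg.trans hsplit
    rw [hneg]
    linarith
  constructor
  · intro hodd
    have h := key n
    rw [Stmt10.coeff_odd_SP x n hodd, mul_zero, sub_zero] at h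
    exact h.symm
  · intro t ht
    subst ht
    have harg : ∀ i ∈ (Finset.univ : Finset (Fin k)), ∀ m ≤ 2*t,
        PowerSeries.coeff m (PowerSeries.rescale (x i) Stmt10.H) =
        PowerSeries.coeff m (PowerSeries.rescale (x i)
          (∏ j ∈ Finset.Icc 1 t, Stmt10.ExpP (-(Stmt10.bq j)) (2*j))) := by
      intro i _ m hm
      rw [PowerSeries.coeff_rescale, PowerSeries.coeff_rescale, Stmt10.H_eq_K t m hm]
    have hcoeff := (Stmt10.coeff_prod_congr Finset.univ _ _ (2*t) harg).trans
      (by rw [Stmt10.prod_rescale_K x t, Stmt10.coeff_prod_ExpP_partition])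
    have hk2 := key (2*t)
    rw [hcoeff] at hk2
    rw [hk2, Stmt10.ut2_eq t x]
    have h4 : (2:ℚ)^(2*t) = 4^t := by rw [pow_mul]; norm_num
    have hfac : (((2*t+1).factorial : ℕ) : ℚ) = (2*t+1) * ((2*t).factorial : ℕ) := by
      rw [Nat.factorial_succ]
      push_cast
      ring
    have h1 : ((2*t : ℕ):ℚ) + 1 ≠ 0 := by positivity
    have h2 : (4:ℚ)^t ≠ 0 := by positivity
    rw [h4, hfac]
    push_cast
    field_simp
    ring
end

section
/- In the formal power series ring ℚ[[t]], one has sinhc(t) := Σ_{m≥0} t^{2m}/(2m+1)! = exp(Σ_{n≥1} (4^n B_{2n}/((2n)·(2n)!)) t^{2n}). Equivalently, (sinhc(t))^{−1} = exp(−Σ_{n≥1} (4^n B_{2n}/((2n)·(2n)!)) t^{2n}). -/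
open PowerSeries Finset

/-- `exp(h) = Σ_{n≥0} h^n/n!` for a power series `h` (with zero constant term, so that
the coefficient of `z^m` only involves `h^n` for `n ≤ m`). -/
noncomputable def expPS (h : PowerSeries ℚ) : PowerSeries ℚ :=
  PowerSeries.mk fun m =>
    ∑ n ∈ Finset.range (m + 1), (PowerSeries.coeff m (h ^ n)) / n.factorial

/-- `sinhc(t) = Σ_{m≥0} t^{2m}/(2m+1)!`. -/
noncomputable def sinhc : PowerSeries ℚ :=
  PowerSeries.mk fun m => if Even m then (1 : ℚ) / (m + 1).factorial else 0

/-- `Σ_{n≥1} (4^n B_{2n}/((2n)(2n)!)) t^{2n}`. -/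
noncomputable def sinhcLog : PowerSeries ℚ :=
  PowerSeries.mk fun m =>
    if m ≠ 0 ∧ Even m then (4 : ℚ) ^ (m / 2) * bernoulli m / (m * m.factorial) else 0

/-! ### Auxiliary lemmas about `expPS` -/

lemma coeff_pow_lt' (h : PowerSeries ℚ) (hc : constantCoeff h = 0) {n j : ℕ} (hj : j < n) :
    coeff j (h ^ n) = 0 :=
  X_pow_dvd_iff.mp (pow_dvd_pow_of_dvd (X_dvd_iff.mpr hc) n) j hj

lemma coeff_expPS' (h : PowerSeries ℚ) (hc : constantCoeff h = 0) (m N : ℕ) (hN : m < N) :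
    coeff m (expPS h) = ∑ n ∈ Finset.range N, (coeff m (h ^ n)) / n.factorial := by
  rw [expPS, coeff_mk]
  refine Finset.sum_subset (Finset.range_subset_range.mpr hN) ?_
  intro n _ hn
  rw [Finset.mem_range, not_lt] at hn
  rw [coeff_pow_lt' h hc (by omega), zero_div]

lemma constantCoeff_expPS' (h : PowerSeries ℚ) : constantCoeff (expPS h) = 1 := by
  rw [← coeff_zero_eq_constantCoeff_apply, expPS, coeff_mk]
  simp

lemma coeff_mul_expPS' (g h : PowerSeries ℚ) (hc : constantCoeff h = 0) (m : ℕ) :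
    coeff m (g * expPS h) = ∑ n ∈ Finset.range (m + 1), (coeff m (g * h ^ n)) / n.factorial := by
  have key : ∀ j ≤ m, coeff j (expPS h)
      = coeff j (∑ n ∈ Finset.range (m + 1), ((n.factorial : ℚ))⁻¹ • h ^ n) := by
    intro j hj
    rw [coeff_expPS' h hc j (m + 1) (Nat.lt_succ_of_le hj), map_sum]
    refine Finset.sum_congr rfl fun n _ => ?_
    rw [map_smul, smul_eq_mul, div_eq_inv_mul]
  rw [coeff_mul]
  have h2 : ∑ p ∈ antidiagonal m, coeff p.1 g * coeff p.2 (expPS h)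
      = ∑ p ∈ antidiagonal m, coeff p.1 g *
        coeff p.2 (∑ n ∈ Finset.range (m + 1), ((n.factorial : ℚ))⁻¹ • h ^ n) := by
    refine Finset.sum_congr rfl fun p hp => ?_
    have := Finset.HasAntidiagonal.mem_antidiagonal.mp hp
    rw [key p.2 (by omega)]
  rw [h2, ← coeff_mul, Finset.mul_sum, map_sum]
  refine Finset.sum_congr rfl fun n _ => ?_
  rw [mul_smul_comm, map_smul, smul_eq_mul, div_eq_inv_mul]

lemma derivative_expPS' (h : PowerSeries ℚ) (hc : constantCoeff h = 0) :
    d⁄dX ℚ (expPS h) = d⁄dX ℚ h * expPS h := by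
  ext m
  rw [coeff_derivative, coeff_mul_expPS' _ _ hc]
  rw [coeff_expPS' h hc (m + 1) (m + 2) (Nat.lt_succ_self _), Finset.sum_mul]
  rw [Finset.sum_range_succ']
  simp only [pow_zero, Nat.factorial_zero]
  have hz : coeff (m + 1) (1 : PowerSeries ℚ) / (1 : ℕ) * (m + 1 : ℚ) = 0 := by
    simp [coeff_one]
  rw [hz, add_zero]
  refine Finset.sum_congr rfl fun n _ => ?_
  have hD : coeff (m + 1) (h ^ (n + 1)) * (m + 1 : ℚ) = coeff m (d⁄dX ℚ (h ^ (n + 1))) := by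
    rw [coeff_derivative]
  have hpow : d⁄dX ℚ (h ^ (n + 1)) = (n + 1 : ℕ) • (h ^ n * d⁄dX ℚ h) := by
    rw [Derivation.leibniz_pow]
    simp [smul_eq_mul]
  rw [div_mul_eq_mul_div, hD, hpow, map_nsmul, nsmul_eq_mul]
  rw [Nat.factorial_succ, Nat.cast_mul]
  have hne : ((n + 1 : ℕ) : ℚ) ≠ 0 := by positivity
  rw [mul_comm (d⁄dX ℚ h) (h ^ n)]
  field_simp

/-! ### Uniqueness of solutions of linear ODEs -/

lemma ode_unique' (f g k : PowerSeries ℚ) (hf : d⁄dX ℚ f = k * f) (hg : d⁄dX ℚ g = k * g)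
    (h0 : constantCoeff f = constantCoeff g) : f = g := by
  have key : ∀ n, coeff n f = coeff n g := by
    intro n
    induction n using Nat.strong_induction_on with
    | _ n ih =>
      match n with
      | 0 => simpa using h0
      | Nat.succ j =>
        have h1 : coeff (j + 1) f * (j + 1 : ℚ) = coeff (j + 1) g * (j + 1 : ℚ) := by
          rw [← coeff_derivative, ← coeff_derivative, hf, hg, coeff_mul, coeff_mul]
          refine Finset.sum_congr rfl fun p hp => ?_
          have := Finset.HasAntidiagonal.mem_antidiagonal.mp hp
          rw [ih p.2 (by omega)]
        have h2 : ((j + 1 : ℕ) : ℚ) ≠ 0 := by positivity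
        exact mul_right_cancel₀ (by push_cast at h2 ⊢; exact h2) h1
  ext n; exact key n

lemma eq_one_of_deriv_zero' (f : PowerSeries ℚ) (hf : d⁄dX ℚ f = 0)
    (h0 : constantCoeff f = 1) : f = 1 := by
  refine PowerSeries.derivative.ext (R := ℚ) ?_ ?_
  · rw [hf]; simp
  · rw [h0]; simp

/-! ### cosh and the hyperbolic identities -/

noncomputable def coshPS : PowerSeries ℚ :=
  PowerSeries.mk fun m => if Even m then (1 : ℚ) / m.factorial else 0

lemma two_mul_coeff' (f : PowerSeries ℚ) (m : ℕ) :
    coeff m (2 * f) = 2 * coeff m f := by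
  have : (2 : PowerSeries ℚ) = C 2 := by norm_num [map_ofNat]
  rw [this, coeff_C_mul]

lemma cosh_eq' : PowerSeries.exp ℚ + evalNegHom (PowerSeries.exp ℚ) = 2 * coshPS := by
  ext m
  rw [map_add, two_mul_coeff']
  rw [show (evalNegHom (exp ℚ)) = rescale (-1) (exp ℚ) from rfl, coeff_rescale]
  simp only [coeff_exp, Algebra.algebraMap_self, RingHom.id_apply, coshPS, coeff_mk]
  rcases Nat.even_or_odd m with he | ho
  · rw [if_pos he, he.neg_one_pow]; ring
  · rw [if_neg (Nat.not_even_iff_odd.mpr ho), ho.neg_one_pow]; ring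

lemma sinh_eq' : PowerSeries.exp ℚ - evalNegHom (PowerSeries.exp ℚ) = 2 * (X * sinhc) := by
  ext m
  rw [map_sub, two_mul_coeff']
  rw [show (evalNegHom (exp ℚ)) = rescale (-1) (exp ℚ) from rfl, coeff_rescale]
  simp only [coeff_exp, Algebra.algebraMap_self, RingHom.id_apply]
  match m with
  | 0 => simp [coeff_zero_X_mul]
  | Nat.succ j =>
    rw [coeff_succ_X_mul]
    simp only [sinhc, coeff_mk, Nat.succ_eq_add_one]
    rcases Nat.even_or_odd j with he | ho
    · rw [if_pos he, (Even.add_one he).neg_one_pow]; ring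
    · rw [if_neg (Nat.not_even_iff_odd.mpr ho), (Odd.add_one ho).neg_one_pow]; ring

lemma derivXsinhc' : d⁄dX ℚ (X * sinhc) = coshPS := by
  ext m
  rw [coeff_derivative, coeff_succ_X_mul]
  simp only [sinhc, coshPS, coeff_mk]
  rcases Nat.even_or_odd m with he | ho
  · rw [if_pos he, if_pos he, Nat.factorial_succ, Nat.cast_mul]
    have : ((m + 1 : ℕ) : ℚ) ≠ 0 := by positivity
    field_simp
    norm_cast
  · rw [if_neg (Nat.not_even_iff_odd.mpr ho), if_neg (Nat.not_even_iff_odd.mpr ho), zero_mul]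

/-! ### The Bernoulli series identity -/

lemma T_eq' : rescale (2 : ℚ) (bernoulliPowerSeries ℚ) + X = 1 + X * d⁄dX ℚ sinhcLog := by
  ext m
  rw [map_add, map_add, coeff_rescale]
  simp only [bernoulliPowerSeries, coeff_mk, Algebra.algebraMap_self, RingHom.id_apply]
  match m with
  | 0 => simp [sinhcLog]
  | 1 =>
    rw [coeff_succ_X_mul, coeff_derivative]
    simp only [sinhcLog, coeff_mk]
    norm_num [coeff_one, coeff_X, bernoulli_one]
  | (j + 2) =>
    rw [coeff_succ_X_mul, coeff_derivative]
    simp only [sinhcLog, coeff_mk]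
    have hX : coeff (j + 2) (X : PowerSeries ℚ) = 0 := by
      rw [coeff_X]; simp
    have h1 : coeff (j + 2) (1 : PowerSeries ℚ) = 0 := by
      rw [coeff_one]; simp
    rw [hX, h1]
    rcases Nat.even_or_odd (j + 2) with he | ho
    · rw [if_pos ⟨by omega, he⟩]
      have h4 : (4 : ℚ) ^ ((j + 2) / 2) = 2 ^ (j + 2) := by
        rw [show (4 : ℚ) = 2 ^ 2 by norm_num, ← pow_mul]
        congr 1
        obtain ⟨k, hk⟩ := he
        omega
      have hne : ((j + 2 : ℕ) : ℚ) ≠ 0 := by positivity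
      have hfne : (((j + 2).factorial : ℕ) : ℚ) ≠ 0 :=
        Nat.cast_ne_zero.mpr (Nat.factorial_ne_zero _)
      rw [h4]
      push_cast
      field_simp
      ring
    · have hcond : ¬((j + 2 : ℕ) ≠ 0 ∧ Even (j + 2)) := by
        rintro ⟨-, h⟩
        exact (Nat.not_even_iff_odd.mpr ho) h
      rw [if_neg hcond]
      have hb : bernoulli (j + 2) = 0 := by
        rw [bernoulli_eq_bernoulli'_of_ne_one (by omega)]
        exact bernoulli'_eq_zero_of_odd ho (by omega)
      simp [hb]

lemma sinhc_ode' : d⁄dX ℚ sinhc = d⁄dX ℚ sinhcLog * sinhc := by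
  set e := PowerSeries.exp ℚ with he_def
  set em := evalNegHom (PowerSeries.exp ℚ) with hem_def
  have hee : e * em = 1 := exp_mul_exp_neg_eq_one (A := ℚ)
  have hB : bernoulliPowerSeries ℚ * (e - 1) = X := bernoulliPowerSeries_mul_exp_sub_one ℚ
  have hB2 : rescale (2 : ℚ) (bernoulliPowerSeries ℚ) * (rescale (2 : ℚ) e - 1)
      = C 2 * X := by
    have := congrArg (rescale (2 : ℚ)) hB
    rwa [map_mul, map_sub, map_one, rescale_X] at this
  have he2 : rescale (2 : ℚ) e = e * e := by
    have h := exp_pow_eq_rescale_exp (A := ℚ) 2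
    rw [show ((2 : ℕ) : ℚ) = (2 : ℚ) by norm_num] at h
    rw [← h]; ring
  have hS : e - em = 2 * (X * sinhc) := sinh_eq'
  have hC : e + em = 2 * coshPS := cosh_eq'
  have hem : em = coshPS - X * sinhc := by
    have h2 : (2 : PowerSeries ℚ) * em = 2 * (coshPS - X * sinhc) := by
      have := congrArg₂ (· - ·) hC hS
      linear_combination this
    have h2ne : (2 : PowerSeries ℚ) ≠ 0 := by
      intro h
      have h' := congrArg (constantCoeff (R := ℚ)) h
      rw [map_ofNat, map_zero] at h'
      norm_num at h'
    exact mul_left_cancel₀ h2ne h2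
  -- main computation: rescale 2 B * (X * sinhc) = X * em
  have hmain : rescale (2 : ℚ) (bernoulliPowerSeries ℚ) * (X * sinhc) = X * em := by
    have h2ne : (2 : PowerSeries ℚ) ≠ 0 := by
      intro h
      have h' := congrArg (constantCoeff (R := ℚ)) h
      rw [map_ofNat, map_zero] at h'
      norm_num at h'
    have hC2 : (C 2 : PowerSeries ℚ) = 2 := by norm_num [map_ofNat]
    have hfct : e * (e - em) = rescale (2 : ℚ) e - 1 := by
      rw [mul_sub, hee, he2]
    have step1 : rescale (2 : ℚ) (bernoulliPowerSeries ℚ) * (e * (e - em)) = 2 * X := by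
      rw [hfct, hB2, hC2]
    rw [hS] at step1
    have step2 : (2 : PowerSeries ℚ) * (rescale (2 : ℚ) (bernoulliPowerSeries ℚ) * e * (X * sinhc))
        = 2 * X := by rw [← step1]; ring
    have step3 : rescale (2 : ℚ) (bernoulliPowerSeries ℚ) * e * (X * sinhc) = X :=
      mul_left_cancel₀ h2ne step2
    calc rescale (2 : ℚ) (bernoulliPowerSeries ℚ) * (X * sinhc)
        = rescale (2 : ℚ) (bernoulliPowerSeries ℚ) * (X * sinhc) * (e * em) := by
          rw [hee, mul_one]
      _ = (rescale (2 : ℚ) (bernoulliPowerSeries ℚ) * e * (X * sinhc)) * em := by ring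
      _ = X * em := by rw [step3]
  -- hence (1 + X * DL) * (X * sinhc) = X * coshPS
  have hT : (1 + X * d⁄dX ℚ sinhcLog) * (X * sinhc) = X * coshPS := by
    rw [← T_eq', add_mul, hmain, hem]
    ring
  -- and coshPS = sinhc + X * d/dX sinhc
  have hcosh : coshPS = sinhc + X * d⁄dX ℚ sinhc := by
    rw [← derivXsinhc']
    have := Derivation.leibniz (d⁄dX ℚ) (a := (X : PowerSeries ℚ)) (b := sinhc)
    rw [this, smul_eq_mul, smul_eq_mul, PowerSeries.derivative_X, mul_one]
    ring
  rw [hcosh] at hT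
  have hXne : (X : PowerSeries ℚ) ≠ 0 := X_ne_zero
  have hT2 : X * (sinhc + X * (d⁄dX ℚ sinhcLog * sinhc))
      = X * (sinhc + X * d⁄dX ℚ sinhc) := by
    rw [← hT]; ring
  have hT3 := mul_left_cancel₀ hXne hT2
  have hT4 : (X : PowerSeries ℚ) * (d⁄dX ℚ sinhcLog * sinhc) = X * d⁄dX ℚ sinhc := by
    have := congrArg (· - sinhc) hT3
    simpa using this
  exact (mul_left_cancel₀ hXne hT4).symm

/-! ### Main theorem -/

theorem stmt15 : sinhc = expPS sinhcLog ∧ sinhc⁻¹ = expPS (-sinhcLog) := by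
  have hc0 : constantCoeff sinhcLog = 0 := by
    rw [← coeff_zero_eq_constantCoeff_apply, sinhcLog, coeff_mk]
    simp
  have hcn0 : constantCoeff (-sinhcLog) = 0 := by
    rw [map_neg, hc0, neg_zero]
  have hs0 : constantCoeff sinhc = 1 := by
    rw [← coeff_zero_eq_constantCoeff_apply, sinhc, coeff_mk]
    norm_num
  have h1 : sinhc = expPS sinhcLog := by
    refine ode_unique' _ _ (d⁄dX ℚ sinhcLog) sinhc_ode' (derivative_expPS' _ hc0) ?_
    rw [hs0, constantCoeff_expPS']
  have hDu : d⁄dX ℚ (expPS (-sinhcLog)) = -(d⁄dX ℚ sinhcLog) * expPS (-sinhcLog) := by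
    rw [derivative_expPS' _ hcn0, map_neg]
  have hprod : sinhc * expPS (-sinhcLog) = 1 := by
    refine eq_one_of_deriv_zero' _ ?_ ?_
    · have := Derivation.leibniz (d⁄dX ℚ) (a := sinhc) (b := expPS (-sinhcLog))
      rw [this, smul_eq_mul, smul_eq_mul, hDu, sinhc_ode']
      ring
    · rw [map_mul, hs0, constantCoeff_expPS', mul_one]
  refine ⟨h1, ?_⟩
  rw [PowerSeries.inv_eq_iff_mul_eq_one (by rw [hs0]; norm_num)]
  rw [mul_comm]
  exact hprod
end

section
/- Let k ≥ 1 and x = (x_1,…,x_k) ∈ ℚ^k. In ℚ[[t]], one has Π_{i=1}^k sinhc(x_i t) = exp(Σ_{n≥1} (4^n B_{2n} p_{2n}(x)/((2n)·(2n)!)) t^{2n}), where sinhc(x_i t) := Σ_{m≥0} x_i^{2m} t^{2m}/(2m+1)!. -/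
open PowerSeries Finset

namespace SAux

noncomputable def L : PowerSeries ℚ :=
  PowerSeries.mk fun m =>
    if m ≠ 0 ∧ Even m then (4 : ℚ) ^ (m / 2) * bernoulli m / (m * m.factorial) else 0

noncomputable def M : PowerSeries ℚ :=
  PowerSeries.mk fun m => if Even m then (4 : ℚ) ^ (m / 2) * bernoulli m / m.factorial else 0

noncomputable def E : PowerSeries ℚ := exp ℚ
noncomputable def Em : PowerSeries ℚ := rescale (-1) E
noncomputable def sh : PowerSeries ℚ := C (1/2) * (E - Em)
noncomputable def ch : PowerSeries ℚ := C (1/2) * (E + Em)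

lemma coeff_E (n : ℕ) : coeff n E = 1 / n.factorial := by
  simp [E, coeff_exp]

lemma coeff_Em (n : ℕ) : coeff n Em = (-1) ^ n / n.factorial := by
  simp [Em, coeff_rescale, coeff_E]
  ring

lemma E_mul_Em : E * Em = 1 := by
  have h := exp_mul_exp_eq_exp_add (1 : ℚ) (-1)
  simp only [rescale_one, RingHom.id_apply, add_neg_cancel] at h
  rw [show Em = rescale (-1) (exp ℚ) from rfl, show E = exp ℚ from rfl, h, rescale_zero]
  simp

lemma rescale_two_E : rescale (2:ℚ) E = E * E := by
  have h := exp_mul_exp_eq_exp_add (1 : ℚ) 1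
  simp only [rescale_one, RingHom.id_apply] at h
  rw [show E = exp ℚ from rfl, show ((2:ℚ)) = 1 + 1 by norm_num, ← h]

lemma rescale_two_B : rescale (2:ℚ) (bernoulliPowerSeries ℚ) = M - X := by
  ext m
  rw [coeff_rescale]
  simp only [bernoulliPowerSeries, coeff_mk, map_sub, M, coeff_X]
  match m with
  | 0 => norm_num
  | 1 => norm_num [bernoulli_one]
  | (n+2) =>
    rcases Nat.even_or_odd (n+2) with he | ho
    · rw [if_pos he, if_neg (by omega)]
      obtain ⟨j, hj⟩ := he
      rw [hj]
      have h2 : (j+j)/2 = j := by omega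
      have h4 : (2:ℚ)^(j+j) = 4^j := by
        rw [← two_mul, pow_mul]; norm_num
      rw [h2, h4]
      simp [eq_ratCast]
      ring
    · rw [if_neg (by simp [Nat.not_even_iff_odd.2 ho]), if_neg (by omega)]
      rw [bernoulli_eq_bernoulli'_of_ne_one (by omega),
        bernoulli'_eq_zero_of_odd ho (by omega)]
      simp

lemma C2 : (C 2 : ℚ⟦X⟧) = 2 := by
  rw [show (2:ℚ) = ((2:ℕ):ℚ) by norm_num, map_natCast]
  norm_num

lemma hC : (2 : ℚ⟦X⟧) * C (1/2) = 1 := by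
  rw [← C2, ← map_mul]
  norm_num

lemma M_sh : M * sh = X * ch := by
  have h1 := congrArg (rescale (2:ℚ)) (bernoulliPowerSeries_mul_exp_sub_one ℚ)
  rw [map_mul, map_sub, map_one, rescale_two_B, show rescale (2:ℚ) (exp ℚ) = E*E from rescale_two_E, rescale_X, C2] at h1
  have h2 := E_mul_Em
  -- h1 : (M - X) * (E * E - 1) = 2 * X
  have h3 : (M - X) * (E - Em) = 2 * X * Em := by
    linear_combination Em * h1 - (M - X) * E * h2
  rw [sh, ch]
  linear_combination C (1/2) * h3

lemma sh_eq : sh = X * sinhc := by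
  ext m
  rw [sh, coeff_C_mul, map_sub, coeff_E, coeff_Em]
  match m with
  | 0 => simp [sinhc]
  | (n+1) =>
    rw [coeff_succ_X_mul, sinhc, coeff_mk]
    rcases Nat.even_or_odd (n+1) with he | ho
    · rw [Even.neg_one_pow he, if_neg (by rwa [Nat.even_add_one] at he)]
      ring
    · rw [Odd.neg_one_pow ho, if_pos (by rcases ho with ⟨j,hj⟩; exact ⟨j, by omega⟩)]
      push_cast
      ring


lemma d_rescale (f : PowerSeries ℚ) (a : ℚ) :
    d⁄dX ℚ (rescale a f) = C a * rescale a (d⁄dX ℚ f) := by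
  ext n
  simp [coeff_derivative, coeff_rescale, pow_succ]
  ring

lemma d_E : d⁄dX ℚ E = E := by
  ext n
  rw [coeff_derivative, coeff_E, coeff_E, Nat.factorial_succ]
  push_cast
  have : ((n:ℚ)+1) ≠ 0 := by positivity
  field_simp

lemma d_Em : d⁄dX ℚ Em = -Em := by
  rw [show Em = rescale (-1) E from rfl, d_rescale, d_E]
  ext n
  simp [coeff_rescale]

lemma d_sh : d⁄dX ℚ sh = ch := by
  rw [sh, ch, Derivation.leibniz, derivative_C, map_sub, d_E, d_Em, smul_eq_mul, smul_eq_mul]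
  ring

lemma d_mul (f g : PowerSeries ℚ) : d⁄dX ℚ (f * g) = f * d⁄dX ℚ g + g * d⁄dX ℚ f := by
  rw [Derivation.leibniz, smul_eq_mul, smul_eq_mul]

lemma e1 : X * d⁄dX ℚ L = M - 1 := by
  ext m
  rw [map_sub]
  match m with
  | 0 => simp [M]
  | (n+1) =>
    rw [coeff_succ_X_mul, coeff_derivative, L, M, coeff_mk, coeff_mk, coeff_one]
    rw [if_neg (show ¬ (n+1 = 0) by omega)]
    rcases Nat.even_or_odd (n+1) with he | ho
    · rw [if_pos (show (n+1) ≠ 0 ∧ Even (n+1) from ⟨by omega, he⟩), if_pos he]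
      have h1 : ((n:ℚ)+1) ≠ 0 := by positivity
      have h2 : ((n+1).factorial : ℚ) ≠ 0 := by positivity
      push_cast
      field_simp
      ring
    · rw [if_neg (show ¬ ((n+1) ≠ 0 ∧ Even (n+1)) by
          simp [Nat.not_even_iff_odd.2 ho]), if_neg (Nat.not_even_iff_odd.2 ho)]
      simp

lemma e2 : X * d⁄dX ℚ sinhc = ch - sinhc := by
  have h := d_sh
  rw [sh_eq, d_mul, derivative_X, mul_one] at h
  linear_combination h

lemma d_sinhc : d⁄dX ℚ sinhc = d⁄dX ℚ L * sinhc := by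
  have key : (X:ℚ⟦X⟧)^2 * d⁄dX ℚ sinhc = X^2 * (d⁄dX ℚ L * sinhc) := by
    have h1 := e1
    have h2 := e2
    have h3 := M_sh
    have h4 := sh_eq
    linear_combination X * h2 - X * sinhc * h1 - h3 + M * h4
  have hx : (X:ℚ⟦X⟧)^2 ≠ 0 := pow_ne_zero 2 X_ne_zero
  exact mul_left_cancel₀ hx key


lemma coeff_pow_zero {h : ℚ⟦X⟧} (h0 : constantCoeff h = 0) {m n : ℕ} (hm : m < n) :
    coeff m (h ^ n) = 0 := by
  have : (X : ℚ⟦X⟧) ^ n ∣ h ^ n := pow_dvd_pow_of_dvd (X_dvd_iff.2 h0) n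
  exact (X_pow_dvd_iff.1 this) m hm

noncomputable def P (h : ℚ⟦X⟧) (m : ℕ) : ℚ⟦X⟧ :=
  ∑ n ∈ range (m+1), C ((n.factorial : ℚ))⁻¹ * h ^ n

lemma coeff_expPS_eq {h : ℚ⟦X⟧} (h0 : constantCoeff h = 0) {q m : ℕ} (hq : q ≤ m) :
    coeff q (expPS h) = coeff q (P h m) := by
  rw [expPS, coeff_mk, P, map_sum]
  calc ∑ n ∈ range (q+1), coeff q (h^n) / n.factorial
      = ∑ n ∈ range (m+1), coeff q (h^n) / n.factorial := by
        apply Finset.sum_subset (Finset.range_subset_range.2 (by omega))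
        intro n hn hnq
        rw [coeff_pow_zero h0 (by simp only [Finset.mem_range] at hn hnq; omega), zero_div]
    _ = _ := Finset.sum_congr rfl fun n _ => by rw [coeff_C_mul, div_eq_inv_mul]

lemma constantCoeff_expPS (h : ℚ⟦X⟧) : constantCoeff (expPS h) = 1 := by
  rw [← coeff_zero_eq_constantCoeff_apply, expPS, coeff_mk]
  simp

lemma coeff_mul_right_congr {a b c : ℚ⟦X⟧} {m : ℕ}
    (hab : ∀ q ≤ m, coeff q a = coeff q b) :
    coeff m (c * a) = coeff m (c * b) := by
  rw [coeff_mul, coeff_mul]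
  refine Finset.sum_congr rfl fun p hp => ?_
  rw [hab p.2 (by rw [Finset.HasAntidiagonal.mem_antidiagonal] at hp; omega)]

lemma dP (h : ℚ⟦X⟧) (m : ℕ) : d⁄dX ℚ (P h (m+1)) = d⁄dX ℚ h * P h m := by
  rw [P, map_sum, Finset.sum_range_succ']
  have h0 : d⁄dX ℚ (C ((Nat.factorial 0 : ℚ))⁻¹ * h ^ 0) = 0 := by
    simp
  rw [h0, add_zero]
  rw [P, Finset.mul_sum]
  refine Finset.sum_congr rfl fun n hn => ?_
  have hcast : ((n+1 : ℕ) : ℚ⟦X⟧) = C (((n+1:ℕ) : ℚ)) := (map_natCast (C : ℚ →+* ℚ⟦X⟧) (n+1)).symm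
  rw [Derivation.leibniz, derivative_C, smul_zero, add_zero, smul_eq_mul,
    Derivation.leibniz_pow, smul_eq_mul, nsmul_eq_mul, hcast, Nat.add_sub_cancel]
  have hfac : (((n+1).factorial : ℚ))⁻¹ * (((n+1:ℕ)) : ℚ) = ((n.factorial : ℚ))⁻¹ := by
    rw [Nat.factorial_succ]
    push_cast
    have h1 : ((n:ℚ)+1) ≠ 0 := by positivity
    have h2 : ((n.factorial : ℚ)) ≠ 0 := by positivity
    field_simp
  calc C (((n+1).factorial : ℚ))⁻¹ * (C (((n+1:ℕ)) : ℚ) * (h ^ n * d⁄dX ℚ h))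
      = C ((((n+1).factorial : ℚ))⁻¹ * (((n+1:ℕ)) : ℚ)) * (h ^ n * d⁄dX ℚ h) := by
        rw [map_mul]; ring
    _ = d⁄dX ℚ h * (C ((n.factorial : ℚ))⁻¹ * h ^ n) := by
        rw [hfac]; ring

lemma deriv_expPS {h : ℚ⟦X⟧} (h0 : constantCoeff h = 0) :
    d⁄dX ℚ (expPS h) = d⁄dX ℚ h * expPS h := by
  ext m
  calc coeff m (d⁄dX ℚ (expPS h))
      = coeff (m+1) (expPS h) * ((m:ℚ)+1) := by rw [coeff_derivative]
    _ = coeff (m+1) (P h (m+1)) * ((m:ℚ)+1) := by rw [coeff_expPS_eq h0 (le_refl (m+1))]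
    _ = coeff m (d⁄dX ℚ (P h (m+1))) := by rw [coeff_derivative]
    _ = coeff m (d⁄dX ℚ h * P h m) := by rw [dP]
    _ = coeff m (d⁄dX ℚ h * expPS h) :=
        coeff_mul_right_congr fun q hq => (coeff_expPS_eq h0 hq).symm

lemma ode_unique {g F G : ℚ⟦X⟧} (hF : d⁄dX ℚ F = g * F) (hG : d⁄dX ℚ G = g * G)
    (hc : constantCoeff F = constantCoeff G) : F = G := by
  ext n
  induction n using Nat.strong_induction_on with
  | _ n ih =>
    match n with
    | 0 => rw [coeff_zero_eq_constantCoeff_apply, coeff_zero_eq_constantCoeff_apply]; exact hc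
    | (n+1) =>
      have hd : coeff n (d⁄dX ℚ F) = coeff n (d⁄dX ℚ G) := by
        rw [hF, hG, coeff_mul, coeff_mul]
        refine Finset.sum_congr rfl fun p hp => ?_
        rw [ih p.2 (by rw [Finset.HasAntidiagonal.mem_antidiagonal] at hp; omega)]
      rw [coeff_derivative, coeff_derivative] at hd
      have hne : ((n:ℚ)+1) ≠ 0 := by positivity
      exact mul_right_cancel₀ hne hd

lemma prod_ode {ι : Type*} (s : Finset ι) (F h : ι → ℚ⟦X⟧)
    (hyp : ∀ i ∈ s, d⁄dX ℚ (F i) = d⁄dX ℚ (h i) * F i) :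
    d⁄dX ℚ (∏ i ∈ s, F i) = d⁄dX ℚ (∑ i ∈ s, h i) * ∏ i ∈ s, F i := by
  classical
  induction s using Finset.induction_on with
  | empty => simp
  | insert _ _ ha ih =>
    rename_i a s
    rw [Finset.prod_insert ha, Finset.sum_insert ha, d_mul, map_add,
      ih (fun i hi => hyp i (Finset.mem_insert_of_mem hi)),
      hyp a (Finset.mem_insert_self a s)]
    ring


lemma d_rescale_sinhc (a : ℚ) :
    d⁄dX ℚ (rescale a sinhc) = d⁄dX ℚ (rescale a L) * rescale a sinhc := by
  rw [d_rescale, d_rescale, d_sinhc, map_mul]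
  ring

end SAux

theorem stmt16 (k : ℕ) (hk : 1 ≤ k) (x : Fin k → ℚ) :
    ∏ i, PowerSeries.rescale (x i) sinhc =
      expPS (PowerSeries.mk fun m =>
        if m ≠ 0 ∧ Even m then
          (4 : ℚ) ^ (m / 2) * bernoulli m * psum m x / (m * m.factorial)
        else 0) := by
  set R : ℚ⟦X⟧ := PowerSeries.mk (fun m =>
      if m ≠ 0 ∧ Even m then
        (4 : ℚ) ^ (m / 2) * bernoulli m * psum m x / (m * m.factorial)
      else 0) with hR
  have hR0 : constantCoeff R = 0 := by
    rw [hR, ← coeff_zero_eq_constantCoeff_apply, coeff_mk, if_neg (by simp)]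
  have hsum : ∑ i : Fin k, rescale (x i) SAux.L = R := by
    ext m
    rw [map_sum, hR, coeff_mk]
    simp only [coeff_rescale, SAux.L, coeff_mk]
    by_cases hme : m ≠ 0 ∧ Even m
    · simp only [if_pos hme]
      rw [← Finset.sum_mul, psum]
      · ring
    · simp only [if_neg hme]
      simp
  have hprod : d⁄dX ℚ (∏ i : Fin k, rescale (x i) sinhc)
      = d⁄dX ℚ R * ∏ i : Fin k, rescale (x i) sinhc := by
    have hP := SAux.prod_ode Finset.univ (fun i => rescale (x i) sinhc)
      (fun i => rescale (x i) SAux.L) (fun i _ => SAux.d_rescale_sinhc (x i))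
    rw [hsum] at hP
    exact hP
  have hc1 : constantCoeff (∏ i : Fin k, rescale (x i) sinhc) = 1 := by
    rw [map_prod]
    apply Finset.prod_eq_one
    intro i _
    rw [← coeff_zero_eq_constantCoeff_apply, coeff_rescale, pow_zero, one_mul,
      sinhc, coeff_mk, if_pos Even.zero]
    norm_num
  exact SAux.ode_unique hprod (SAux.deriv_expPS hR0)
    (by rw [hc1, SAux.constantCoeff_expPS])
end
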